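/- arXiv:2506.23475 — 7 statements merged into one kernel-verified Lean document; each statement's English description precedes it below -/
import Mathlib

section
/- For any vectors v_1, ..., v_K in R^n, (1/K) ∑_{k=1}^K ⟨v_k, ∑_{l=1}^k v_l⟩ − ((K+1)/(2K²)) ‖∑_{k=1}^K v_k‖² = (1/(2K²)) ∑_{k=1}^K ∑_{l=1}^{k−1} ‖v_k − v_l‖². -/
open Finset RealInnerProductSpace

theorem inner_partial_sum_identity (n K : ℕ) (hK : 0 < K)
    (v : ℕ → EuclideanSpace ℝ (Fin n)) :
    (1 / (K : ℝ)) * ∑ k ∈ Icc 1 K, ⟪v k, (∑ l ∈ Icc 1 k, v l)⟫ -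
        (((K : ℝ) + 1) / (2 * (K : ℝ) ^ 2)) * ‖∑ k ∈ Icc 1 K, v k‖ ^ 2 =
      (1 / (2 * (K : ℝ) ^ 2)) * ∑ k ∈ Icc 1 K, ∑ l ∈ Icc 1 (k - 1), ‖v k - v l‖ ^ 2 := by
  set a : ℕ → ℕ → ℝ := fun k l => ⟪v k, v l⟫ with ha
  have hsymm : ∀ k l, a k l = a l k := fun k l => real_inner_comm _ _
  set P : ℝ := ∑ k ∈ Icc 1 K, ∑ l ∈ Icc 1 K, a k l with hP
  set D : ℝ := ∑ k ∈ Icc 1 K, a k k with hD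
  set T : ℝ := ∑ k ∈ Icc 1 K, ∑ l ∈ Ico 1 k, a k l with hT
  -- generic strict-triangle lemma
  have tri : ∀ f : ℕ → ℕ → ℝ, (∀ k l, f k l = f l k) →
      2 * (∑ k ∈ Icc 1 K, ∑ l ∈ Ico 1 k, f k l) =
        (∑ k ∈ Icc 1 K, ∑ l ∈ Icc 1 K, f k l) - ∑ k ∈ Icc 1 K, f k k := by
    intro f hf
    have split : ∑ k ∈ Icc 1 K, ∑ l ∈ Icc 1 K, f k l
        = ∑ k ∈ Icc 1 K, ((∑ l ∈ Icc 1 k, f k l) + ∑ l ∈ Ioc k K, f k l) := by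
      refine Finset.sum_congr rfl fun k hk => ?_
      rw [mem_Icc] at hk
      rw [show Icc 1 k = Ioc 0 k from (Finset.Icc_add_one_left_eq_Ioc 0 k).symm,
        show Icc 1 K = Ioc 0 K from (Finset.Icc_add_one_left_eq_Ioc 0 K).symm,
        Finset.sum_Ioc_consecutive _ (Nat.zero_le k) hk.2]
    have upper : ∑ k ∈ Icc 1 K, ∑ l ∈ Ioc k K, f k l
        = ∑ k ∈ Icc 1 K, ∑ l ∈ Ico 1 k, f k l := by
      rw [Finset.sum_comm' (t' := Icc 1 K) (s' := fun l => Ico 1 l)]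
      · exact Finset.sum_congr rfl fun k _ => Finset.sum_congr rfl fun l _ => hf l k
      · intro x y
        simp only [mem_Icc, mem_Ioc, mem_Ico]
        omega
    have diag : ∀ k ∈ Icc 1 K, ∑ l ∈ Icc 1 k, f k l = (∑ l ∈ Ico 1 k, f k l) + f k k := by
      intro k hk
      rw [mem_Icc] at hk
      rw [← Finset.Ico_add_one_right_eq_Icc, Finset.sum_Ico_succ_top hk.1]
    rw [split, Finset.sum_add_distrib, upper, Finset.sum_congr rfl diag,
      Finset.sum_add_distrib]
    ring
  have hTP : 2 * T = P - D := tri a hsymm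
  -- first sum
  have h1 : ∑ k ∈ Icc 1 K, ⟪v k, (∑ l ∈ Icc 1 k, v l)⟫ = T + D := by
    rw [hT, hD, ← Finset.sum_add_distrib]
    refine Finset.sum_congr rfl fun k hk => ?_
    rw [mem_Icc] at hk
    rw [inner_sum, ← Finset.Ico_add_one_right_eq_Icc, Finset.sum_Ico_succ_top hk.1]
  -- norm of total sum
  have h2 : ‖∑ k ∈ Icc 1 K, v k‖ ^ 2 = P := by
    rw [← real_inner_self_eq_norm_sq, inner_sum, hP]
    refine Finset.sum_congr rfl fun k _ => ?_
    rw [sum_inner]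
    exact Finset.sum_congr rfl fun l _ => real_inner_comm _ _
  -- RHS sum
  have h3 : ∑ k ∈ Icc 1 K, ∑ l ∈ Icc 1 (k - 1), ‖v k - v l‖ ^ 2 = (K : ℝ) * D - P := by
    have e1 : ∑ k ∈ Icc 1 K, ∑ l ∈ Icc 1 (k - 1), ‖v k - v l‖ ^ 2
        = ∑ k ∈ Icc 1 K, ∑ l ∈ Ico 1 k, (a k k + a l l - 2 * a k l) := by
      refine Finset.sum_congr rfl fun k hk => ?_
      rw [mem_Icc] at hk
      have hico : Icc 1 (k - 1) = Ico 1 k := by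
        ext l; simp only [mem_Icc, mem_Ico]; omega
      rw [hico]
      refine Finset.sum_congr rfl fun l _ => ?_
      rw [norm_sub_sq_real, ← real_inner_self_eq_norm_sq, ← real_inner_self_eq_norm_sq]
      ring
    have hsg : ∀ k l, (a k k + a l l - 2 * a k l) = (a l l + a k k - 2 * a l k) := by
      intro k l; rw [hsymm k l]; ring
    have e2 := tri (fun k l => a k k + a l l - 2 * a k l) hsg
    have cardK : (#(Icc 1 K) : ℝ) = (K : ℝ) := by
      rw [Nat.card_Icc]; push_cast [Nat.add_sub_cancel]; ring
    have A : ∑ k ∈ Icc 1 K, ∑ _l ∈ Icc 1 K, a k k = (K : ℝ) * D := by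
      simp only [Finset.sum_const, nsmul_eq_mul, cardK, hD, ← Finset.mul_sum]
    have B : ∑ k ∈ Icc 1 K, ∑ l ∈ Icc 1 K, a l l = (K : ℝ) * D := by
      rw [Finset.sum_comm]; exact A
    have C : ∑ k ∈ Icc 1 K, ∑ l ∈ Icc 1 K, (2 * a k l) = 2 * P := by
      rw [hP, Finset.mul_sum]
      exact Finset.sum_congr rfl fun k _ => by rw [Finset.mul_sum]
    have full : ∑ k ∈ Icc 1 K, ∑ l ∈ Icc 1 K, (a k k + a l l - 2 * a k l)
        = (K : ℝ) * D + (K : ℝ) * D - 2 * P := by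
      calc ∑ k ∈ Icc 1 K, ∑ l ∈ Icc 1 K, (a k k + a l l - 2 * a k l)
          = (∑ k ∈ Icc 1 K, ∑ _l ∈ Icc 1 K, a k k) + (∑ k ∈ Icc 1 K, ∑ l ∈ Icc 1 K, a l l)
            - ∑ k ∈ Icc 1 K, ∑ l ∈ Icc 1 K, (2 * a k l) := by
            simp only [← Finset.sum_add_distrib, ← Finset.sum_sub_distrib]
        _ = (K : ℝ) * D + (K : ℝ) * D - 2 * P := by rw [A, B, C]
    have diagz : ∑ k ∈ Icc 1 K, (a k k + a k k - 2 * a k k) = 0 :=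
      Finset.sum_eq_zero fun k _ => by ring
    rw [e1]
    rw [full, diagz] at e2
    linarith
  rw [h1, h2, h3]
  have hKne : (K : ℝ) ≠ 0 := Nat.cast_ne_zero.mpr hK.ne'
  field_simp
  linear_combination (K : ℝ) * hTP
end

section
/- Moreau identity: for a closed convex proper function f on R^n and any α > 0 and x ∈ R^n, prox_{αf}(x) + α prox_{α^{-1} f*}(x/α) = x. -/
open RealInnerProductSpace

noncomputable section

/-- A closed convex proper function, modeled as a real-valued function `f` on a
nonempty convex domain `D` with closed epigraph. -/
def IsCCP {n : ℕ} (D : Set (EuclideanSpace ℝ (Fin n)))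
    (f : EuclideanSpace ℝ (Fin n) → ℝ) : Prop :=
  D.Nonempty ∧ ConvexOn ℝ D f ∧
    IsClosed {p : EuclideanSpace ℝ (Fin n) × ℝ | p.1 ∈ D ∧ f p.1 ≤ p.2}

/-- `p` is the proximal point of `f` (with domain `D`) at `x`. -/
def IsProxOn {n : ℕ} (D : Set (EuclideanSpace ℝ (Fin n)))
    (f : EuclideanSpace ℝ (Fin n) → ℝ) (x p : EuclideanSpace ℝ (Fin n)) : Prop :=
  p ∈ D ∧ ∀ y ∈ D, f p + (1 / 2) * ‖p - x‖ ^ 2 ≤ f y + (1 / 2) * ‖y - x‖ ^ 2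

/-- `(Dgs, gs)` is the Fenchel conjugate of `(Dg, g)`: `Dgs` is the set where
`sup_{x ∈ Dg} (⟨u,x⟩ − g(x))` is finite, and there `gs u` is that supremum. -/
def IsConjugateOn {n : ℕ} (Dg : Set (EuclideanSpace ℝ (Fin n)))
    (g : EuclideanSpace ℝ (Fin n) → ℝ) (Dgs : Set (EuclideanSpace ℝ (Fin n)))
    (gs : EuclideanSpace ℝ (Fin n) → ℝ) : Prop :=
  ∀ u, (u ∈ Dgs ↔ BddAbove ((fun x => ⟪u, x⟫ - g x) '' Dg)) ∧
    (u ∈ Dgs → IsLUB ((fun x => ⟪u, x⟫ - g x) '' Dg) (gs u))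

/-- Moreau identity: `prox_{αf}(x) + α prox_{α⁻¹ f*}(x/α) = x`. -/
theorem moreau_identity (n : ℕ) (α : ℝ) (hα : 0 < α)
    (Df Dfs : Set (EuclideanSpace ℝ (Fin n)))
    (f fs : EuclideanSpace ℝ (Fin n) → ℝ)
    (hf : IsCCP Df f) (hconj : IsConjugateOn Df f Dfs fs)
    (x p q : EuclideanSpace ℝ (Fin n))
    (hp : IsProxOn Df (fun y => α * f y) x p)
    (hq : IsProxOn Dfs (fun u => α⁻¹ * fs u) (α⁻¹ • x) q) :
    p + α • q = x := by

  obtain ⟨hDne, hconv, hclosed⟩ := hf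
  obtain ⟨hpD, hpmin⟩ := hp
  obtain ⟨hqD, hqmin⟩ := hq
  set u : EuclideanSpace ℝ (Fin n) := α⁻¹ • (x - p) with hu_def
  -- Step 1: subgradient inequality at p
  have key : ∀ y ∈ Df, ⟪u, y⟫ - f y ≤ ⟪u, p⟫ - f p := by
    intro y hy
    have hstep : ∀ t : ℝ, t ∈ Set.Ioc (0:ℝ) 1 →
        0 ≤ α * (f y - f p) + ⟪p - x, y - p⟫ + t / 2 * ‖y - p‖ ^ 2 := by
      rintro t ⟨ht0, ht1⟩
      have hyt : (1 - t) • p + t • y ∈ Df :=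
        hconv.1 hpD hy (by linarith) ht0.le (by ring)
      have hfyt : f ((1 - t) • p + t • y) ≤ (1 - t) * f p + t * f y :=
        hconv.2 hpD hy (by linarith) ht0.le (by ring)
      have hmin := hpmin _ hyt
      have hrw : (1 - t) • p + t • y - x = (p - x) + t • (y - p) := by
        module
      have hnorm : ‖(1 - t) • p + t • y - x‖ ^ 2
          = ‖p - x‖ ^ 2 + 2 * (t * ⟪p - x, y - p⟫) + t ^ 2 * ‖y - p‖ ^ 2 := by
        rw [hrw, norm_add_sq_real, real_inner_smul_right, norm_smul, mul_pow, Real.norm_eq_abs, sq_abs]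
      rw [hnorm] at hmin
      have hfyt' := mul_le_mul_of_nonneg_left hfyt hα.le
      nlinarith [mul_pos ht0 hα, sq_nonneg t, hmin, hfyt', ht0]
    have h1 : 0 ≤ α * (f y - f p) + ⟪p - x, y - p⟫ := by
      by_contra hcon
      push_neg at hcon
      set A := α * (f y - f p) + ⟪p - x, y - p⟫ with hA
      set C := ‖y - p‖ ^ 2 with hC
      have hC0 : 0 ≤ C := sq_nonneg _
      set t := min 1 (-A / (C + 1)) with ht
      have ht0 : 0 < t := lt_min one_pos (div_pos (by linarith) (by positivity))
      have htIoc : t ∈ Set.Ioc (0:ℝ) 1 := ⟨ht0, min_le_left _ _⟩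
      have hineq := hstep t htIoc
      have ht2 : t * (C + 1) ≤ -A := by
        rw [← le_div_iff₀ (by positivity)]
        exact min_le_right _ _
      have hid : t * C = t * (C + 1) - t := by ring
      linarith
    have hinner : ⟪u, y⟫ - ⟪u, p⟫ = α⁻¹ * (-⟪p - x, y - p⟫) := by
      rw [← inner_sub_right, hu_def, real_inner_smul_left, ← neg_sub p x,
        inner_neg_left]
    have h2 : α⁻¹ * (-⟪p - x, y - p⟫) ≤ f y - f p := by
      have h3 := mul_le_mul_of_nonneg_left
        (show -⟪p - x, y - p⟫ ≤ α * (f y - f p) from by linarith)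
        (inv_nonneg.mpr hα.le)
      calc α⁻¹ * (-⟪p - x, y - p⟫) ≤ α⁻¹ * (α * (f y - f p)) := h3
        _ = f y - f p := by field_simp
    linarith
  -- u ∈ Dfs and fs u = ⟪u, p⟫ - f p
  have hbdd : BddAbove ((fun z => ⟪u, z⟫ - f z) '' Df) :=
    ⟨⟪u, p⟫ - f p, by rintro _ ⟨y, hy, rfl⟩; exact key y hy⟩
  have huDfs : u ∈ Dfs := ((hconj u).1).mpr hbdd
  have hlub := (hconj u).2 huDfs
  have hfsu : fs u = ⟪u, p⟫ - f p := by
    apply le_antisymm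
    · exact hlub.2 (by rintro _ ⟨y, hy, rfl⟩; exact key y hy)
    · exact hlub.1 ⟨p, hpD, rfl⟩
  -- lower bound for fs q
  have hlq : ⟪q, p⟫ - f p ≤ fs q := ((hconj q).2 hqD).1 ⟨p, hpD, rfl⟩
  -- optimality of q compared with u
  have hqu := hqmin u huDfs
  simp only [] at hqu
  have e1 : u - α⁻¹ • x = -(α⁻¹ • p) := by rw [hu_def]; module
  have e2 : q - α⁻¹ • x = (q - u) + -(α⁻¹ • p) := by rw [hu_def]; module
  have n1 : ‖u - α⁻¹ • x‖ ^ 2 = ‖α⁻¹ • p‖ ^ 2 := by rw [e1, norm_neg]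
  have n2 : ‖q - α⁻¹ • x‖ ^ 2
      = ‖q - u‖ ^ 2 + 2 * (-(α⁻¹ * (⟪q, p⟫ - ⟪u, p⟫))) + ‖α⁻¹ • p‖ ^ 2 := by
    rw [e2, norm_add_sq_real, norm_neg, inner_neg_right, real_inner_smul_right,
      inner_sub_left]
  rw [n1, n2, hfsu] at hqu
  have hlq' := mul_le_mul_of_nonneg_left hlq (inv_nonneg.mpr hα.le)
  have hsq : ‖q - u‖ ^ 2 ≤ 0 := by nlinarith [hqu, hlq']
  have hqeq : q = u := by
    have hn : ‖q - u‖ = 0 := by nlinarith [norm_nonneg (q - u), sq_nonneg ‖q - u‖]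
    rwa [norm_eq_zero, sub_eq_zero] at hn
  rw [hqeq, hu_def, smul_smul, mul_inv_cancel₀ hα.ne', one_smul]
  abel
end
end

section
/- Let f, g be closed convex proper functions on R^n, α > 0, and let the DRS-gf iteration be u^{k+1} = prox_{α^{-1} g*}(u^k + x^k/α), x^{k+1} = prox_{αf}(x^k − α(2u^{k+1} − u^k)). Then the ergodic iterates x̄^K = (1/K)∑_{k=1}^K x^k, ū^K = (1/K)∑_{k=1}^K u^k satisfy L(x̄^K, u) − L(x, ū^K) ≤ (1/(α(K+1)))(‖x^0 − x‖² + α²‖u^0 − u‖²) for all x ∈ dom f and u ∈ dom g*, where L(x,u) = f(x) + ⟨u, x⟩ − g*(u). -/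
open Finset RealInnerProductSpace

noncomputable section

lemma key_identity {n : ℕ} (α : ℝ) (hα : α ≠ 0) (xk xp uk up xx uu : EuclideanSpace ℝ (Fin n)) :
    α*⟪uu,xp⟫ - α*⟪up,xx⟫ - (1/2)*(‖(xk+α•uk)-(xx+α•uu)‖^2 - ‖(xp+α•up)-(xx+α•uu)‖^2 - ‖(xp+α•up)-(xk+α•uk)‖^2)
    = α^2*((1/2)*‖up-(uk+α⁻¹•xk)‖^2 + (1/2)*‖uu-up‖^2 - (1/2)*‖uu-(uk+α⁻¹•xk)‖^2)
      + ((1/2)*‖xp-(xk-α•((2:ℝ)•up-uk))‖^2 + (1/2)*‖xx-xp‖^2 - (1/2)*‖xx-(xk-α•((2:ℝ)•up-uk))‖^2) := by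
  have h1 : ∀ w : EuclideanSpace ℝ (Fin n), α^2*((1/2)*‖w-(uk+α⁻¹•xk)‖^2) = (1/2)*‖α•w-α•uk-xk‖^2 := by
    intro w
    have : α•w-α•uk-xk = α•(w-(uk+α⁻¹•xk)) := by
      rw [smul_sub, smul_add, smul_smul, mul_inv_cancel₀ hα, one_smul]; abel
    rw [this, norm_smul]; simp [mul_pow, sq_abs]; ring
  rw [show α^2*((1/2)*‖up-(uk+α⁻¹•xk)‖^2 + (1/2)*‖uu-up‖^2 - (1/2)*‖uu-(uk+α⁻¹•xk)‖^2)
      = α^2*((1/2)*‖up-(uk+α⁻¹•xk)‖^2) + α^2*((1/2)*‖uu-up‖^2) - α^2*((1/2)*‖uu-(uk+α⁻¹•xk)‖^2) by ring,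
    h1 up, h1 uu]
  simp only [← real_inner_self_eq_norm_sq]
  simp only [inner_sub_left, inner_sub_right, inner_add_left, inner_add_right,
    real_inner_smul_left, real_inner_smul_right]
  simp only [real_inner_comm xp xk, real_inner_comm uk xk, real_inner_comm up xk,
    real_inner_comm xx xk, real_inner_comm uu xk, real_inner_comm uk xp,
    real_inner_comm up xp, real_inner_comm xx xp, real_inner_comm uu xp,
    real_inner_comm up uk, real_inner_comm xx uk, real_inner_comm uu uk,
    real_inner_comm xx up, real_inner_comm uu up, real_inner_comm uu xx]
  ring

lemma comb_norm_sq {n : ℕ} (t : ℝ) (p y x : EuclideanSpace ℝ (Fin n)) :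
    ‖((1-t)•p + t•y) - x‖^2 = (1-t)*‖p-x‖^2 + t*‖y-x‖^2 - t*(1-t)*‖y-p‖^2 := by
  simp only [← real_inner_self_eq_norm_sq]
  simp only [inner_sub_left, inner_sub_right, inner_add_left, inner_add_right,
    real_inner_smul_left, real_inner_smul_right]
  simp only [real_inner_comm y p, real_inner_comm x p, real_inner_comm x y]
  ring

lemma prox_strong {n : ℕ} {D : Set (EuclideanSpace ℝ (Fin n))}
    {φ : EuclideanSpace ℝ (Fin n) → ℝ} (hφ : ConvexOn ℝ D φ)
    {x p : EuclideanSpace ℝ (Fin n)} (hp : IsProxOn D φ x p) :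
    ∀ y ∈ D, φ p + (1/2)*‖p-x‖^2 + (1/2)*‖y-p‖^2 ≤ φ y + (1/2)*‖y-x‖^2 := by
  intro y hy
  have hc0 : (0:ℝ) ≤ ‖y-p‖^2 := sq_nonneg _
  have key : ∀ t : ℝ, 0 < t → t < 1 →
      φ p + (1/2)*‖p-x‖^2 + ((1-t)/2)*‖y-p‖^2 ≤ φ y + (1/2)*‖y-x‖^2 := by
    intro t ht ht1
    have hmem : (1-t)•p + t•y ∈ D := hφ.1 hp.1 hy (by linarith) ht.le (by ring)
    have h1 : φ ((1-t)•p + t•y) ≤ (1-t)*φ p + t*φ y := hφ.2 hp.1 hy (by linarith) ht.le (by ring)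
    have h2 := hp.2 _ hmem
    rw [comb_norm_sq] at h2
    have h3 : t*(φ p + (1/2)*‖p-x‖^2 + ((1-t)/2)*‖y-p‖^2 - (φ y + (1/2)*‖y-x‖^2)) ≤ 0 := by
      nlinarith [h1, h2]
    nlinarith [h3, ht]
  by_contra hcon
  push_neg at hcon
  have hε0 : (0:ℝ) < φ p + (1/2)*‖p-x‖^2 + (1/2)*‖y-p‖^2 - (φ y + (1/2)*‖y-x‖^2) := by linarith
  set ε : ℝ := φ p + (1/2)*‖p-x‖^2 + (1/2)*‖y-p‖^2 - (φ y + (1/2)*‖y-x‖^2) with hε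
  have ht0 : 0 < min (1/2) (ε/(‖y-p‖^2+1)) := lt_min (by norm_num) (by positivity)
  have ht1 : min (1/2) (ε/(‖y-p‖^2+1)) < 1 := lt_of_le_of_lt (min_le_left _ _) (by norm_num)
  have h := key _ ht0 ht1
  have h4 : min (1/2) (ε/(‖y-p‖^2+1)) * ‖y-p‖^2 ≤ (ε/(‖y-p‖^2+1)) * ‖y-p‖^2 :=
    mul_le_mul_of_nonneg_right (min_le_right _ _) hc0
  have h5 : (ε/(‖y-p‖^2+1)) * ‖y-p‖^2 < ε := by
    rw [div_mul_eq_mul_div, div_lt_iff₀ (by linarith)]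
    nlinarith
  nlinarith [h, h4, h5]

lemma conj_convexOn {n : ℕ} {Dg Dgs : Set (EuclideanSpace ℝ (Fin n))}
    {g gs : EuclideanSpace ℝ (Fin n) → ℝ} (hconj : IsConjugateOn Dg g Dgs gs) :
    ConvexOn ℝ Dgs gs := by
  have hub : ∀ u1 ∈ Dgs, ∀ u2 ∈ Dgs, ∀ a b : ℝ, 0 ≤ a → 0 ≤ b → a + b = 1 →
      a * gs u1 + b * gs u2 ∈ upperBounds ((fun xp => ⟪a•u1+b•u2, xp⟫ - g xp) '' Dg) := by
    rintro u1 h1 u2 h2 a b ha hb hab r ⟨xp, hxp, rfl⟩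
    have e1 : ⟪u1,xp⟫ - g xp ≤ gs u1 := ((hconj u1).2 h1).1 ⟨xp, hxp, rfl⟩
    have e2 : ⟪u2,xp⟫ - g xp ≤ gs u2 := ((hconj u2).2 h2).1 ⟨xp, hxp, rfl⟩
    have e3 := mul_le_mul_of_nonneg_left e1 ha
    have e4 := mul_le_mul_of_nonneg_left e2 hb
    simp only [inner_add_left, real_inner_smul_left]
    have hg : a * g xp + b * g xp = g xp := by rw [← add_mul, hab, one_mul]
    linarith [e3, e4, hg]
  constructor
  · intro u1 h1 u2 h2 a b ha hb hab
    exact (hconj _).1.mpr ⟨_, hub u1 h1 u2 h2 a b ha hb hab⟩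
  · intro u1 h1 u2 h2 a b ha hb hab
    have hmem : a•u1+b•u2 ∈ Dgs := (hconj _).1.mpr ⟨_, hub u1 h1 u2 h2 a b ha hb hab⟩
    simpa using ((hconj _).2 hmem).2 (hub u1 h1 u2 h2 a b ha hb hab)

lemma cs_aux {n : ℕ} (K : ℕ) (Z : ℕ → EuclideanSpace ℝ (Fin n)) (z : EuclideanSpace ℝ (Fin n)) :
    ‖Z 0 - z‖^2 ≤ ((K:ℝ)+1) * (∑ k ∈ range K, ‖Z (k+1) - Z k‖^2 + ‖Z K - z‖^2) := by
  set W : ℕ → EuclideanSpace ℝ (Fin n) := fun j => if j ≤ K then Z j else z with hW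
  have htel : ∑ j ∈ range (K+1), (W j - W (j+1)) = W 0 - W (K+1) := Finset.sum_range_sub' W (K+1)
  have hW0 : W 0 = Z 0 := if_pos (Nat.zero_le K)
  have hWK1 : W (K+1) = z := if_neg (by omega)
  have hnorm : ‖Z 0 - z‖ ≤ ∑ j ∈ range (K+1), ‖W j - W (j+1)‖ := by
    rw [← hW0, ← hWK1, ← htel]; exact norm_sum_le _ _
  have hsq : (∑ j ∈ range (K+1), ‖W j - W (j+1)‖)^2
      ≤ ((K:ℝ)+1) * ∑ j ∈ range (K+1), ‖W j - W (j+1)‖^2 := by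
    have h := sq_sum_le_card_mul_sum_sq (s := range (K+1)) (f := fun j => ‖W j - W (j+1)‖)
    simpa [Finset.card_range] using h
  have hsum_eq : ∑ j ∈ range (K+1), ‖W j - W (j+1)‖^2
      = ∑ k ∈ range K, ‖Z (k+1) - Z k‖^2 + ‖Z K - z‖^2 := by
    rw [Finset.sum_range_succ]
    congr 1
    · apply Finset.sum_congr rfl
      intro j hj
      have hj' := Finset.mem_range.mp hj
      rw [show W j = Z j from if_pos (by omega), show W (j+1) = Z (j+1) from if_pos (by omega),
        norm_sub_rev]
    · rw [show W K = Z K from if_pos le_rfl, hWK1]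
  have h0 : ‖Z 0 - z‖^2 ≤ (∑ j ∈ range (K+1), ‖W j - W (j+1)‖)^2 :=
    pow_le_pow_left₀ (norm_nonneg _) hnorm 2
  rw [hsum_eq] at hsq
  linarith

set_option maxHeartbeats 1000000 in
/-- Ergodic convergence of DRS-gf: the primal–dual gap of the averaged iterates is
bounded by `(‖x⁰ − x‖² + α²‖u⁰ − u‖²)/(α(K+1))`. -/
theorem drs_gf_ergodic_rate (n K : ℕ) (hK : 1 ≤ K) (α : ℝ) (hα : 0 < α)
    (Df Dg Dgs : Set (EuclideanSpace ℝ (Fin n)))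
    (f g gs : EuclideanSpace ℝ (Fin n) → ℝ)
    (hf : IsCCP Df f) (hg : IsCCP Dg g) (hconj : IsConjugateOn Dg g Dgs gs)
    (x u : ℕ → EuclideanSpace ℝ (Fin n))
    (hu : ∀ k, IsProxOn Dgs (fun v => α⁻¹ * gs v) (u k + α⁻¹ • x k) (u (k + 1)))
    (hx : ∀ k, IsProxOn Df (fun v => α * f v)
      (x k - α • ((2 : ℝ) • u (k + 1) - u k)) (x (k + 1))) :
    ∀ xx ∈ Df, ∀ uu ∈ Dgs,
      (f ((K : ℝ)⁻¹ • ∑ k ∈ Icc 1 K, x k) +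
          ⟪uu, (K : ℝ)⁻¹ • ∑ k ∈ Icc 1 K, x k⟫ - gs uu) -
        (f xx + ⟪(K : ℝ)⁻¹ • ∑ k ∈ Icc 1 K, u k, xx⟫ -
          gs ((K : ℝ)⁻¹ • ∑ k ∈ Icc 1 K, u k)) ≤
      (1 / (α * ((K : ℝ) + 1))) * (‖x 0 - xx‖ ^ 2 + α ^ 2 * ‖u 0 - uu‖ ^ 2) := by
  intro xx hxx uu huu
  have hαne : α ≠ 0 := ne_of_gt hα
  have hκ : (0:ℝ) < (K:ℝ) := by exact_mod_cast Nat.lt_of_lt_of_le Nat.zero_lt_one hK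
  have hgsconv : ConvexOn ℝ Dgs gs := conj_convexOn hconj
  have hfconv : ConvexOn ℝ Df f := hf.2.1
  have hφu : ConvexOn ℝ Dgs (fun v => α⁻¹ * gs v) := by
    refine ⟨hgsconv.1, fun a ha b hb wa wb hwa hwb hw => ?_⟩
    have h := hgsconv.2 ha hb hwa hwb hw
    have hαi : (0:ℝ) ≤ α⁻¹ := by positivity
    simp only [smul_eq_mul] at h ⊢
    nlinarith [mul_le_mul_of_nonneg_left h hαi]
  have hφx : ConvexOn ℝ Df (fun v => α * f v) := by
    refine ⟨hfconv.1, fun a ha b hb wa wb hwa hwb hw => ?_⟩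
    have h := hfconv.2 ha hb hwa hwb hw
    simp only [smul_eq_mul] at h ⊢
    nlinarith [mul_le_mul_of_nonneg_left h hα.le]
  -- per-step estimate
  have step : ∀ k : ℕ,
      α*(f (x (k+1)) + ⟪uu, x (k+1)⟫ - gs uu - f xx - ⟪u (k+1), xx⟫ + gs (u (k+1)))
      ≤ (1/2)*(‖(x k+α•u k)-(xx+α•uu)‖^2 - ‖(x (k+1)+α•u (k+1))-(xx+α•uu)‖^2
          - ‖(x (k+1)+α•u (k+1))-(x k+α•u k)‖^2) := by
    intro k
    have hI := prox_strong hφu (hu k) uu huu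
    have hII := prox_strong hφx (hx k) xx hxx
    have hid := key_identity α hαne (x k) (x (k+1)) (u k) (u (k+1)) xx uu
    have hI2 := mul_le_mul_of_nonneg_left hI (sq_nonneg α)
    have e1 : α^2 * (α⁻¹ * gs (u (k+1))) = α * gs (u (k+1)) := by
      field_simp
    have e2 : α^2 * (α⁻¹ * gs uu) = α * gs uu := by
      field_simp
    linarith [hI2, hII, hid, e1, e2]
  -- sum of per-step estimates
  set T : ℝ := ∑ k ∈ range K, (f (x (k+1)) + ⟪uu, x (k+1)⟫ - gs uu - f xx
      - ⟪u (k+1), xx⟫ + gs (u (k+1))) with hT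
  have hsum : α * T ≤ (1/2)*‖(x 0+α•u 0)-(xx+α•uu)‖^2
      - (1/2)*‖(x K+α•u K)-(xx+α•uu)‖^2
      - (1/2)*∑ k ∈ range K, ‖(x (k+1)+α•u (k+1))-(x k+α•u k)‖^2 := by
    have h1 : α * T = ∑ k ∈ range K, α*(f (x (k+1)) + ⟪uu, x (k+1)⟫ - gs uu - f xx
        - ⟪u (k+1), xx⟫ + gs (u (k+1))) := by rw [hT, Finset.mul_sum]
    have h2 : α * T ≤ ∑ k ∈ range K,
        (1/2)*(‖(x k+α•u k)-(xx+α•uu)‖^2 - ‖(x (k+1)+α•u (k+1))-(xx+α•uu)‖^2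
          - ‖(x (k+1)+α•u (k+1))-(x k+α•u k)‖^2) := by
      rw [h1]; exact Finset.sum_le_sum (fun k _ => step k)
    have h3 : ∑ k ∈ range K,
        (1/2)*(‖(x k+α•u k)-(xx+α•uu)‖^2 - ‖(x (k+1)+α•u (k+1))-(xx+α•uu)‖^2
          - ‖(x (k+1)+α•u (k+1))-(x k+α•u k)‖^2)
        = (∑ k ∈ range K, ((1/2)*‖(x k+α•u k)-(xx+α•uu)‖^2
            - (1/2)*‖(x (k+1)+α•u (k+1))-(xx+α•uu)‖^2))
          - ∑ k ∈ range K, (1/2)*‖(x (k+1)+α•u (k+1))-(x k+α•u k)‖^2 := by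
      rw [← Finset.sum_sub_distrib]
      exact Finset.sum_congr rfl (fun k _ => by ring)
    have h4 := Finset.sum_range_sub' (fun k => (1/2)*‖(x k+α•u k)-(xx+α•uu)‖^2) K
    rw [h3, h4, ← Finset.mul_sum] at h2
    linarith [h2]
  -- Cauchy-Schwarz over K+1 increments
  have hCS : ‖(x 0+α•u 0)-(xx+α•uu)‖^2 ≤ ((K:ℝ)+1) *
      (∑ k ∈ range K, ‖(x (k+1)+α•u (k+1))-(x k+α•u k)‖^2
        + ‖(x K+α•u K)-(xx+α•uu)‖^2) := by
    exact cs_aux K (fun k => x k + α • u k) (xx + α • uu)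
  -- initial distance bound
  have hinit : ‖(x 0+α•u 0)-(xx+α•uu)‖^2 ≤ 2*‖x 0 - xx‖^2 + 2*(α^2*‖u 0 - uu‖^2) := by
    have he : (x 0+α•u 0)-(xx+α•uu) = (x 0 - xx) + α•(u 0 - uu) := by module
    rw [he, norm_add_sq_real]
    have h1 : ⟪x 0 - xx, α•(u 0 - uu)⟫ ≤ ‖x 0 - xx‖ * ‖α•(u 0-uu)‖ := real_inner_le_norm _ _
    have h2 : ‖α•(u 0-uu)‖ = α*‖u 0-uu‖ := by
      rw [norm_smul, Real.norm_eq_abs, abs_of_pos hα]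
    rw [h2] at h1 ⊢
    nlinarith [sq_nonneg (‖x 0 - xx‖ - α*‖u 0 - uu‖), h1]
  -- combine: (K+1) * (α*T) ≤ K * X
  have hS : ((K:ℝ)+1) * (α*T) ≤ (K:ℝ) * (‖x 0 - xx‖^2 + α^2*‖u 0 - uu‖^2) := by
    nlinarith [mul_le_mul_of_nonneg_left hsum (show (0:ℝ) ≤ (K:ℝ)+1 by positivity),
      mul_le_mul_of_nonneg_left hinit (show (0:ℝ) ≤ (K:ℝ) by positivity), hCS]
  -- membership of iterates
  have hxmem : ∀ k ∈ Icc 1 K, x k ∈ Df := by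
    intro k hk
    obtain ⟨h1, _⟩ := Finset.mem_Icc.mp hk
    obtain ⟨j, rfl⟩ : ∃ j, k = j + 1 := ⟨k - 1, by omega⟩
    exact (hx j).1
  have humem : ∀ k ∈ Icc 1 K, u k ∈ Dgs := by
    intro k hk
    obtain ⟨h1, _⟩ := Finset.mem_Icc.mp hk
    obtain ⟨j, rfl⟩ : ∃ j, k = j + 1 := ⟨k - 1, by omega⟩
    exact (hu j).1
  have hwsum : ∑ _k ∈ Icc 1 K, (K:ℝ)⁻¹ = 1 := by
    rw [Finset.sum_const, Nat.card_Icc]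
    simp only [Nat.add_sub_cancel, nsmul_eq_mul]
    field_simp
  -- Jensen for f and gs
  have havgf : f ((K:ℝ)⁻¹ • ∑ k ∈ Icc 1 K, x k) ≤ ∑ k ∈ Icc 1 K, (K:ℝ)⁻¹ * f (x k) := by
    rw [Finset.smul_sum]
    have h := hfconv.map_sum_le (t := Icc 1 K) (w := fun _ => (K:ℝ)⁻¹) (p := x)
      (fun i _ => by positivity) hwsum hxmem
    simp only [smul_eq_mul] at h
    exact h
  have havggs : gs ((K:ℝ)⁻¹ • ∑ k ∈ Icc 1 K, u k) ≤ ∑ k ∈ Icc 1 K, (K:ℝ)⁻¹ * gs (u k) := by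
    rw [Finset.smul_sum]
    have h := hgsconv.map_sum_le (t := Icc 1 K) (w := fun _ => (K:ℝ)⁻¹) (p := u)
      (fun i _ => by positivity) hwsum humem
    simp only [smul_eq_mul] at h
    exact h
  have hinner1 : ⟪uu, (K:ℝ)⁻¹ • ∑ k ∈ Icc 1 K, x k⟫
      = ∑ k ∈ Icc 1 K, (K:ℝ)⁻¹ * ⟪uu, x k⟫ := by
    rw [real_inner_smul_right, inner_sum, Finset.mul_sum]
  have hinner2 : ⟪(K:ℝ)⁻¹ • ∑ k ∈ Icc 1 K, u k, xx⟫
      = ∑ k ∈ Icc 1 K, (K:ℝ)⁻¹ * ⟪u k, xx⟫ := by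
    rw [real_inner_smul_left, sum_inner, Finset.mul_sum]
  have hconst : ∀ c : ℝ, ∑ _k ∈ Icc 1 K, (K:ℝ)⁻¹ * c = c := by
    intro c; rw [← Finset.sum_mul, hwsum, one_mul]
  -- reindex
  have hreindex : ∑ k ∈ Icc 1 K, (f (x k) + ⟪uu, x k⟫ - gs uu - f xx - ⟪u k, xx⟫ + gs (u k)) = T := by
    rw [hT, ← Finset.Ico_add_one_right_eq_Icc, Finset.sum_Ico_eq_sum_range]
    exact Finset.sum_congr rfl (fun i _ => by rw [add_comm 1 i])
  have hgap : (f ((K : ℝ)⁻¹ • ∑ k ∈ Icc 1 K, x k) +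
          ⟪uu, (K : ℝ)⁻¹ • ∑ k ∈ Icc 1 K, x k⟫ - gs uu) -
        (f xx + ⟪(K : ℝ)⁻¹ • ∑ k ∈ Icc 1 K, u k, xx⟫ -
          gs ((K : ℝ)⁻¹ • ∑ k ∈ Icc 1 K, u k)) ≤ (K:ℝ)⁻¹ * T := by
    have hsplit : ∑ k ∈ Icc 1 K, (K:ℝ)⁻¹ * (f (x k) + ⟪uu, x k⟫ - gs uu - f xx
        - ⟪u k, xx⟫ + gs (u k))
        = (∑ k ∈ Icc 1 K, (K:ℝ)⁻¹ * f (x k)) + (∑ k ∈ Icc 1 K, (K:ℝ)⁻¹ * ⟪uu, x k⟫)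
          - gs uu - f xx - (∑ k ∈ Icc 1 K, (K:ℝ)⁻¹ * ⟪u k, xx⟫)
          + (∑ k ∈ Icc 1 K, (K:ℝ)⁻¹ * gs (u k)) := by
      simp only [mul_add, mul_sub, Finset.sum_add_distrib, Finset.sum_sub_distrib]
      rw [hconst (gs uu), hconst (f xx)]
    have hTmul : (K:ℝ)⁻¹ * T = ∑ k ∈ Icc 1 K, (K:ℝ)⁻¹ * (f (x k) + ⟪uu, x k⟫ - gs uu - f xx
        - ⟪u k, xx⟫ + gs (u k)) := by
      rw [← hreindex, Finset.mul_sum]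
    rw [hTmul, hsplit, hinner1, hinner2]
    linarith [havgf, havggs]
  -- final arithmetic
  refine le_trans hgap ?_
  have hpos : (0:ℝ) < α * ((K:ℝ)+1) := by positivity
  rw [show (1 / (α * ((K : ℝ) + 1))) * (‖x 0 - xx‖ ^ 2 + α ^ 2 * ‖u 0 - uu‖ ^ 2)
      = (‖x 0 - xx‖ ^ 2 + α ^ 2 * ‖u 0 - uu‖ ^ 2) / (α * ((K:ℝ)+1)) by ring,
    le_div_iff₀ hpos]
  have h5 : (K:ℝ)⁻¹ * T * (α * ((K:ℝ)+1)) = (K:ℝ)⁻¹ * (((K:ℝ)+1) * (α*T)) := by ring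
  have h6 : (K:ℝ)⁻¹ * ((K:ℝ) * (‖x 0 - xx‖^2 + α^2*‖u 0 - uu‖^2))
      = ‖x 0 - xx‖^2 + α^2*‖u 0 - uu‖^2 := by field_simp
  rw [h5]
  calc (K:ℝ)⁻¹ * (((K:ℝ)+1) * (α*T))
      ≤ (K:ℝ)⁻¹ * ((K:ℝ) * (‖x 0 - xx‖^2 + α^2*‖u 0 - uu‖^2)) :=
        mul_le_mul_of_nonneg_left hS (by positivity)
    _ = ‖x 0 - xx‖^2 + α^2*‖u 0 - uu‖^2 := h6
end
end

section
/- Let f, g be closed convex proper functions on R^n, α > 0, and let the DRS-fg iteration be x^{k+1} = prox_{αf}(x^k − α u^k), u^{k+1} = prox_{α^{-1} g*}(u^k + (2x^{k+1} − x^k)/α). Then the ergodic iterates x̄^K, ū^K satisfy L(x̄^K, u) − L(x, ū^K) ≤ (1/(α(K+1)))(‖x^0 − x‖² + α²‖u^0 − u‖²) for all x ∈ dom f, u ∈ dom g*, where L(x,u) = f(x) + ⟨u,x⟩ − g*(u). -/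
open Finset RealInnerProductSpace

noncomputable section

/-- Three-point inequality for proximal points of convex functions. -/
lemma prox_three_point {n : ℕ} {D : Set (EuclideanSpace ℝ (Fin n))}
    {h : EuclideanSpace ℝ (Fin n) → ℝ} (hh : ConvexOn ℝ D h)
    {z p : EuclideanSpace ℝ (Fin n)} (hp : IsProxOn D h z p)
    {y : EuclideanSpace ℝ (Fin n)} (hy : y ∈ D) :
    h p + (1/2)*‖p - z‖^2 + (1/2)*‖y - p‖^2 ≤ h y + (1/2)*‖y - z‖^2 := by
  have key : ∀ t : ℝ, 0 < t → t < 1 →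
      h p + (1/2)*‖p - z‖^2 + (1/2)*‖y - p‖^2 ≤ h y + (1/2)*‖y - z‖^2 + (t/2)*‖y - p‖^2 := by
    intro t ht0 ht1
    have hw : (1 - t) • p + t • y ∈ D := hh.1 hp.1 hy (by linarith) ht0.le (by ring)
    have h1 := hp.2 _ hw
    have h2 : h ((1 - t) • p + t • y) ≤ (1 - t) * h p + t * h y :=
      hh.2 hp.1 hy (by linarith) ht0.le (by ring)
    have e1 : (1 - t) • p + t • y - z = (1 - t) • (p - z) + t • (y - z) := by
      module
    have e2 : ‖(1 - t) • (p - z) + t • (y - z)‖^2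
        = (1 - t)^2 * ‖p - z‖^2 + 2*(t*(1-t))*⟪p - z, y - z⟫ + t^2*‖y - z‖^2 := by
      rw [norm_add_sq_real, norm_smul, norm_smul, real_inner_smul_left, real_inner_smul_right]
      rw [Real.norm_eq_abs, Real.norm_eq_abs, abs_of_nonneg (by linarith : (0:ℝ) ≤ 1 - t),
        abs_of_nonneg ht0.le]
      ring
    have e3 : ‖y - p‖^2 = ‖y - z‖^2 - 2*⟪p - z, y - z⟫ + ‖p - z‖^2 := by
      have : y - p = (y - z) - (p - z) := by module
      rw [this, norm_sub_sq_real, real_inner_comm]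
      try ring
    rw [e1, e2] at h1
    nlinarith [h1, h2, ht0]
  refine le_of_forall_pos_le_add fun ε hε => ?_
  have hd : (0:ℝ) < ‖y - p‖^2 + 1 := by positivity
  set t := min (1/2) (ε / (‖y - p‖^2 + 1)) with htdef
  have ht0 : 0 < t := lt_min (by norm_num) (div_pos hε hd)
  have ht1 : t < 1 := lt_of_le_of_lt (min_le_left _ _) (by norm_num)
  have := key t ht0 ht1
  have hb : (t/2)*‖y - p‖^2 ≤ ε := by
    have h1 : t ≤ ε / (‖y - p‖^2 + 1) := min_le_right _ _
    have h2 : t * (‖y - p‖^2 + 1) ≤ ε := by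
      rw [← le_div_iff₀ hd] at *; exact h1
    nlinarith [ht0, sq_nonneg ‖y - p‖]
  linarith

/-- The key algebraic identity for one DRS step. -/
lemma drs_key_id {n : ℕ} (a b xx C D U : EuclideanSpace ℝ (Fin n)) :
    ⟪U, b⟫ - ⟪D, xx⟫ + (1/2)*‖xx - (a - C)‖^2 - (1/2)*‖b - (a - C)‖^2 - (1/2)*‖xx - b‖^2
      + (1/2)*‖U - (C + ((2:ℝ) • b - a))‖^2 - (1/2)*‖D - (C + ((2:ℝ) • b - a))‖^2
      - (1/2)*‖U - D‖^2
    = (1/2) * (‖(a - C) - (xx - U)‖^2 - ‖(b - D) - (xx - U)‖^2 - ‖(a - C) - (b - D)‖^2) := by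
  simp only [← real_inner_self_eq_norm_sq, PiLp.inner_apply, RCLike.inner_apply, conj_trivial,
    PiLp.sub_apply, PiLp.add_apply, PiLp.smul_apply, smul_eq_mul,
    Finset.mul_sum, ← Finset.sum_sub_distrib, ← Finset.sum_add_distrib]
  refine Finset.sum_congr rfl fun i _ => by ring

/-- One step of DRS-fg: primal–dual gap bound by a telescoping quantity. -/
lemma drs_step {n : ℕ} {α : ℝ} (hα : 0 < α) (a b c d xx uu : EuclideanSpace ℝ (Fin n))
    (F1 F2 G1 G2 : ℝ)
    (hA : α*F1 + (1/2)*‖b - (a - α•c)‖^2 + (1/2)*‖xx - b‖^2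
        ≤ α*F2 + (1/2)*‖xx - (a - α•c)‖^2)
    (hB : α⁻¹*G1 + (1/2)*‖d - (c + α⁻¹ • ((2:ℝ)•b - a))‖^2 + (1/2)*‖uu - d‖^2
        ≤ α⁻¹*G2 + (1/2)*‖uu - (c + α⁻¹ • ((2:ℝ)•b - a))‖^2) :
    F1 + ⟪uu, b⟫ - G2 - F2 - ⟪d, xx⟫ + G1
      ≤ (1/(2*α)) * (‖(a - α•c) - (xx - α•uu)‖^2 - ‖(b - α•d) - (xx - α•uu)‖^2
          - ‖(a - α•c) - (b - α•d)‖^2) := by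
  have hcancel : ∀ v : EuclideanSpace ℝ (Fin n), α • (α⁻¹ • v) = v := by
    intro v; rw [smul_smul, mul_inv_cancel₀ hα.ne', one_smul]
  have ed : α • (d - (c + α⁻¹ • ((2:ℝ)•b - a))) = α•d - (α•c + ((2:ℝ)•b - a)) := by
    rw [smul_sub, smul_add, hcancel]
  have eu : α • (uu - (c + α⁻¹ • ((2:ℝ)•b - a))) = α•uu - (α•c + ((2:ℝ)•b - a)) := by
    rw [smul_sub, smul_add, hcancel]
  have nsq : ∀ v : EuclideanSpace ℝ (Fin n), ‖α • v‖^2 = α^2 * ‖v‖^2 := by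
    intro v; rw [norm_smul, Real.norm_eq_abs, abs_of_pos hα]; ring
  have n1 : α^2 * ‖d - (c + α⁻¹ • ((2:ℝ)•b - a))‖^2
      = ‖α•d - (α•c + ((2:ℝ)•b - a))‖^2 := by rw [← ed, nsq]
  have n2 : α^2 * ‖uu - (c + α⁻¹ • ((2:ℝ)•b - a))‖^2
      = ‖α•uu - (α•c + ((2:ℝ)•b - a))‖^2 := by rw [← eu, nsq]
  have n3 : α^2 * ‖uu - d‖^2 = ‖α•uu - α•d‖^2 := by rw [← smul_sub, nsq]
  have hB2 : α*G1 + (1/2)*‖α•d - (α•c + ((2:ℝ)•b - a))‖^2 + (1/2)*‖α•uu - α•d‖^2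
      ≤ α*G2 + (1/2)*‖α•uu - (α•c + ((2:ℝ)•b - a))‖^2 := by
    have h := mul_le_mul_of_nonneg_left hB (sq_nonneg α)
    have h2 : α^2 * (α⁻¹ * G1) = α * G1 := by field_simp; try ring
    have h3 : α^2 * (α⁻¹ * G2) = α * G2 := by field_simp; try ring
    nlinarith [h, h2, h3, n1, n2, n3]
  have hid := drs_key_id a b xx (α•c) (α•d) (α•uu)
  have hi1 : ⟪α•uu, b⟫ = α * ⟪uu, b⟫ := real_inner_smul_left _ _ _
  have hi2 : ⟪α•d, xx⟫ = α * ⟪d, xx⟫ := real_inner_smul_left _ _ _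
  have hmain : α * (F1 + ⟪uu, b⟫ - G2 - F2 - ⟪d, xx⟫ + G1)
      ≤ (1/2) * (‖(a - α•c) - (xx - α•uu)‖^2 - ‖(b - α•d) - (xx - α•uu)‖^2
          - ‖(a - α•c) - (b - α•d)‖^2) := by
    rw [← hid]; linarith [hA, hB2, hi1, hi2]
  have hR : (1/(2*α)) * (‖(a - α•c) - (xx - α•uu)‖^2 - ‖(b - α•d) - (xx - α•uu)‖^2
      - ‖(a - α•c) - (b - α•d)‖^2)
      = ((1/2) * (‖(a - α•c) - (xx - α•uu)‖^2 - ‖(b - α•d) - (xx - α•uu)‖^2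
      - ‖(a - α•c) - (b - α•d)‖^2)) / α := by field_simp; try ring
  rw [hR, le_div_iff₀ hα]
  linarith [hmain]

set_option maxHeartbeats 1000000 in
/-- Ergodic convergence of DRS-fg: the primal–dual gap of the averaged iterates is
bounded by `(‖x⁰ − x‖² + α²‖u⁰ − u‖²)/(α(K+1))`. -/
theorem drs_fg_ergodic_rate (n K : ℕ) (hK : 1 ≤ K) (α : ℝ) (hα : 0 < α)
    (Df Dg Dgs : Set (EuclideanSpace ℝ (Fin n)))
    (f g gs : EuclideanSpace ℝ (Fin n) → ℝ)
    (hf : IsCCP Df f) (hg : IsCCP Dg g) (hconj : IsConjugateOn Dg g Dgs gs)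
    (x u : ℕ → EuclideanSpace ℝ (Fin n))
    (hx : ∀ k, IsProxOn Df (fun v => α * f v) (x k - α • u k) (x (k + 1)))
    (hu : ∀ k, IsProxOn Dgs (fun v => α⁻¹ * gs v)
      (u k + α⁻¹ • ((2 : ℝ) • x (k + 1) - x k)) (u (k + 1))) :
    ∀ xx ∈ Df, ∀ uu ∈ Dgs,
      (f ((K : ℝ)⁻¹ • ∑ k ∈ Icc 1 K, x k) +
          ⟪uu, (K : ℝ)⁻¹ • ∑ k ∈ Icc 1 K, x k⟫ - gs uu) -
        (f xx + ⟪(K : ℝ)⁻¹ • ∑ k ∈ Icc 1 K, u k, xx⟫ -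
          gs ((K : ℝ)⁻¹ • ∑ k ∈ Icc 1 K, u k)) ≤
      (1 / (α * ((K : ℝ) + 1))) * (‖x 0 - xx‖ ^ 2 + α ^ 2 * ‖u 0 - uu‖ ^ 2) := by
  intro xx hxx uu huu
  have hKpos : (0:ℝ) < (K:ℝ) := by exact_mod_cast Nat.lt_of_lt_of_le Nat.zero_lt_one hK
  have hconvf : ConvexOn ℝ Df (fun v => α * f v) := by
    simpa [smul_eq_mul] using ConvexOn.smul hα.le hf.2.1
  have hgsconv : ConvexOn ℝ Dgs gs := conj_convexOn hconj
  have hconvg : ConvexOn ℝ Dgs (fun v => α⁻¹ * gs v) := by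
    simpa [smul_eq_mul] using ConvexOn.smul (inv_nonneg.mpr hα.le) hgsconv
  set z : ℕ → EuclideanSpace ℝ (Fin n) := fun k => (x k - α • u k) - (xx - α • uu)
    with hzdef
  -- one step inequality
  have hstep : ∀ k : ℕ,
      f (x (k+1)) + ⟪uu, x (k+1)⟫ - gs uu - f xx - ⟪u (k+1), xx⟫ + gs (u (k+1))
      ≤ (1/(2*α)) * (‖z k‖^2 - ‖z (k+1)‖^2 - ‖z k - z (k+1)‖^2) := by
    intro k
    have hA := prox_three_point hconvf (hx k) hxx
    have hB := prox_three_point hconvg (hu k) huu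
    have h := drs_step hα (x k) (x (k+1)) (u k) (u (k+1)) xx uu
      (f (x (k+1))) (f xx) (gs (u (k+1))) (gs uu) hA hB
    have e0 : (x k - α • u k) - (xx - α • uu) = z k := by simp [hzdef]
    have e1 : (x (k+1) - α • u (k+1)) - (xx - α • uu) = z (k+1) := by simp [hzdef]
    have e2 : (x k - α • u k) - (x (k+1) - α • u (k+1)) = z k - z (k+1) := by
      simp only [hzdef]; abel
    rw [e0, e1, e2] at h
    exact h
  -- telescoping sum
  have hsum : ∑ k ∈ range K,
      (f (x (k+1)) + ⟪uu, x (k+1)⟫ - gs uu - f xx - ⟪u (k+1), xx⟫ + gs (u (k+1)))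
      ≤ (1/(2*α)) * (‖z 0‖^2 - ‖z K‖^2 - ∑ k ∈ range K, ‖z k - z (k+1)‖^2) := by
    refine (Finset.sum_le_sum fun k _ => hstep k).trans (le_of_eq ?_)
    rw [← Finset.mul_sum]
    congr 1
    rw [Finset.sum_sub_distrib, Finset.sum_range_sub' (fun k => ‖z k‖^2) K]
  -- Cauchy–Schwarz lower bound on the residuals
  have hCS : ‖z 0‖^2 ≤ ((K:ℝ)+1) * (‖z K‖^2 + ∑ k ∈ range K, ‖z k - z (k+1)‖^2) := by
    set h : ℕ → ℝ := fun i => if i < K then ‖z i - z (i+1)‖ else ‖z K‖ with hh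
    have tele : z 0 = z K + ∑ k ∈ range K, (z k - z (k+1)) := by
      rw [Finset.sum_range_sub' z K]; abel
    have tri : ‖z 0‖ ≤ ∑ i ∈ range (K+1), h i := by
      rw [Finset.sum_range_succ]
      have e : ∑ i ∈ range K, h i = ∑ i ∈ range K, ‖z i - z (i+1)‖ :=
        Finset.sum_congr rfl fun i hi => if_pos (Finset.mem_range.mp hi)
      have hKK : h K = ‖z K‖ := if_neg (lt_irrefl K)
      rw [e, hKK, tele, add_comm]
      exact (norm_add_le _ _).trans (by gcongr; exact norm_sum_le _ _)
    have hsq : ∑ i ∈ range (K+1), (h i)^2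
        = ∑ k ∈ range K, ‖z k - z (k+1)‖^2 + ‖z K‖^2 := by
      rw [Finset.sum_range_succ]
      congr 1
      · exact Finset.sum_congr rfl fun i hi => by
          simp only [hh]; rw [if_pos (Finset.mem_range.mp hi)]
      · simp only [hh]; rw [if_neg (lt_irrefl K)]
    have hcs := sq_sum_le_card_mul_sum_sq (s := Finset.range (K+1)) (f := h)
    rw [Finset.card_range, hsq] at hcs
    have hz0 : ‖z 0‖^2 ≤ (∑ i ∈ range (K+1), h i)^2 :=
      pow_le_pow_left₀ (norm_nonneg _) tri 2
    have hcast : ((K+1 : ℕ) : ℝ) = (K:ℝ)+1 := by push_cast; ring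
    rw [hcast] at hcs
    nlinarith [hz0, hcs]
  -- Jensen / averaging
  have hxmem : ∀ k ∈ Icc 1 K, x k ∈ Df := by
    intro k hk
    obtain ⟨j, rfl⟩ := Nat.exists_eq_add_of_le (Finset.mem_Icc.mp hk).1
    simpa [Nat.add_comm] using (hx j).1
  have humem : ∀ k ∈ Icc 1 K, u k ∈ Dgs := by
    intro k hk
    obtain ⟨j, rfl⟩ := Nat.exists_eq_add_of_le (Finset.mem_Icc.mp hk).1
    simpa [Nat.add_comm] using (hu j).1
  have hw0 : ∀ k ∈ Icc 1 K, (0:ℝ) ≤ (K:ℝ)⁻¹ := fun _ _ => by positivity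
  have hw1 : ∑ _k ∈ Icc 1 K, (K:ℝ)⁻¹ = 1 := by
    rw [Finset.sum_const, Nat.card_Icc, Nat.add_sub_cancel, nsmul_eq_mul]
    field_simp
  have hfJ : f ((K:ℝ)⁻¹ • ∑ k ∈ Icc 1 K, x k) ≤ ∑ k ∈ Icc 1 K, (K:ℝ)⁻¹ * f (x k) := by
    have := hf.2.1.map_sum_le hw0 hw1 hxmem
    simpa [← Finset.smul_sum, smul_eq_mul] using this
  have hgJ : gs ((K:ℝ)⁻¹ • ∑ k ∈ Icc 1 K, u k) ≤ ∑ k ∈ Icc 1 K, (K:ℝ)⁻¹ * gs (u k) := by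
    have := hgsconv.map_sum_le hw0 hw1 humem
    simpa [← Finset.smul_sum, smul_eq_mul] using this
  have hiJ1 : ⟪uu, (K:ℝ)⁻¹ • ∑ k ∈ Icc 1 K, x k⟫ = ∑ k ∈ Icc 1 K, (K:ℝ)⁻¹ * ⟪uu, x k⟫ := by
    rw [real_inner_smul_right, inner_sum, Finset.mul_sum]
  have hiJ2 : ⟪(K:ℝ)⁻¹ • ∑ k ∈ Icc 1 K, u k, xx⟫ = ∑ k ∈ Icc 1 K, (K:ℝ)⁻¹ * ⟪u k, xx⟫ := by
    rw [real_inner_smul_left, sum_inner, Finset.mul_sum]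
  have hconst : ∀ c : ℝ, ∑ _k ∈ Icc 1 K, (K:ℝ)⁻¹ * c = c := by
    intro c
    rw [← Finset.sum_mul, hw1, one_mul]
  have hjensen :
      (f ((K : ℝ)⁻¹ • ∑ k ∈ Icc 1 K, x k) + ⟪uu, (K : ℝ)⁻¹ • ∑ k ∈ Icc 1 K, x k⟫ - gs uu) -
        (f xx + ⟪(K : ℝ)⁻¹ • ∑ k ∈ Icc 1 K, u k, xx⟫ - gs ((K : ℝ)⁻¹ • ∑ k ∈ Icc 1 K, u k))
      ≤ ∑ k ∈ Icc 1 K, (K:ℝ)⁻¹ *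
          (f (x k) + ⟪uu, x k⟫ - gs uu - f xx - ⟪u k, xx⟫ + gs (u k)) := by
    have expand : ∑ k ∈ Icc 1 K, (K:ℝ)⁻¹ *
        (f (x k) + ⟪uu, x k⟫ - gs uu - f xx - ⟪u k, xx⟫ + gs (u k))
        = ∑ k ∈ Icc 1 K, (K:ℝ)⁻¹ * f (x k) + ∑ k ∈ Icc 1 K, (K:ℝ)⁻¹ * ⟪uu, x k⟫
          - gs uu - f xx - ∑ k ∈ Icc 1 K, (K:ℝ)⁻¹ * ⟪u k, xx⟫
          + ∑ k ∈ Icc 1 K, (K:ℝ)⁻¹ * gs (u k) := by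
      simp only [mul_add, mul_sub, Finset.sum_add_distrib, Finset.sum_sub_distrib]
      rw [hconst (gs uu), hconst (f xx)]
    rw [expand]
    have h1 := hfJ
    have h2 := hgJ
    rw [hiJ1, hiJ2]
    linarith
  -- reindex Icc 1 K to range K
  have hre : ∑ k ∈ Icc 1 K, (K:ℝ)⁻¹ *
      (f (x k) + ⟪uu, x k⟫ - gs uu - f xx - ⟪u k, xx⟫ + gs (u k))
      = (K:ℝ)⁻¹ * ∑ k ∈ range K,
      (f (x (k+1)) + ⟪uu, x (k+1)⟫ - gs uu - f xx - ⟪u (k+1), xx⟫ + gs (u (k+1))) := by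
    rw [← Finset.mul_sum]
    congr 1
    rw [← Finset.Ico_add_one_right_eq_Icc, Finset.sum_Ico_eq_sum_range]
    simp [Nat.add_comm]
  -- final arithmetic
  set T : ℝ := ‖z 0‖^2 - ‖z K‖^2 - ∑ k ∈ range K, ‖z k - z (k+1)‖^2 with hT
  have hA0 : ‖z 0‖^2 ≤ 2*(‖x 0 - xx‖^2 + α^2*‖u 0 - uu‖^2) := by
    have e : z 0 = (x 0 - xx) - α • (u 0 - uu) := by
      simp only [hzdef]
      rw [smul_sub]; abel
    have key : ∀ p q : EuclideanSpace ℝ (Fin n), ‖p - q‖^2 ≤ 2*‖p‖^2 + 2*‖q‖^2 := by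
      intro p q
      have h1 := norm_sub_sq_real p q
      have h2 := abs_real_inner_le_norm p q
      have h3 := (abs_le.mp h2).1
      nlinarith [sq_nonneg (‖p‖ - ‖q‖)]
    have e2 : ‖α • (u 0 - uu)‖^2 = α^2 * ‖u 0 - uu‖^2 := by
      rw [norm_smul, Real.norm_eq_abs, abs_of_pos hα]; ring
    calc ‖z 0‖^2 = ‖(x 0 - xx) - α • (u 0 - uu)‖^2 := by rw [e]
      _ ≤ 2*‖x 0 - xx‖^2 + 2*‖α • (u 0 - uu)‖^2 := key _ _
      _ = 2*(‖x 0 - xx‖^2 + α^2*‖u 0 - uu‖^2) := by rw [e2]; ring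
  have final : (K:ℝ)⁻¹ * ((1/(2*α)) * T)
      ≤ (1 / (α * ((K : ℝ) + 1))) * (‖x 0 - xx‖ ^ 2 + α ^ 2 * ‖u 0 - uu‖ ^ 2) := by
    have e1 : (K:ℝ)⁻¹ * ((1/(2*α)) * T) = T / (2*α*(K:ℝ)) := by
      rw [div_eq_mul_inv, mul_inv]; ring
    have e2 : (1 / (α * ((K : ℝ) + 1))) * (‖x 0 - xx‖ ^ 2 + α ^ 2 * ‖u 0 - uu‖ ^ 2)
        = (‖x 0 - xx‖ ^ 2 + α ^ 2 * ‖u 0 - uu‖ ^ 2) / (α * ((K:ℝ)+1)) := by ring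
    rw [e1, e2, div_le_div_iff₀ (by positivity) (by positivity)]
    have hTT : T * ((K:ℝ)+1) ≤ (‖x 0 - xx‖ ^ 2 + α ^ 2 * ‖u 0 - uu‖ ^ 2) * (2*(K:ℝ)) := by
      rw [hT]
      nlinarith [hCS, hA0, hKpos]
    nlinarith [hTT, hα]
  have c2 : (K:ℝ)⁻¹ * ∑ k ∈ range K,
      (f (x (k+1)) + ⟪uu, x (k+1)⟫ - gs uu - f xx - ⟪u (k+1), xx⟫ + gs (u (k+1)))
      ≤ (K:ℝ)⁻¹ * ((1/(2*α)) * T) :=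
    mul_le_mul_of_nonneg_left hsum (by positivity)
  exact le_trans hjensen (le_trans (le_of_eq hre) (le_trans c2 final))
end
end

section
/- For any K ≥ 1 and α > 0, there exist closed convex proper functions f, g on R^n and points x^0, u^0, x̃, ũ with ‖x^0 − x̃‖² + α²‖u^0 − ũ‖² = 1 such that the DRS-gf iterates satisfy L(x̄^K, ũ) − L(x̃, ū^K) = 1/(α(K+1)); in particular one may take f(x) = (√2/(α(K+1)))‖x‖, g = 0, x^0 = e/√2, u^0 = x^0/α, x̃ = ũ = 0 with e a unit vector. -/
open Finset RealInnerProductSpace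

noncomputable section

lemma prox_unique {n : ℕ} {F : EuclideanSpace ℝ (Fin n) → ℝ}
    (hF : ConvexOn ℝ Set.univ F) {x p q : EuclideanSpace ℝ (Fin n)}
    (hp : IsProxOn Set.univ F x p) (hq : IsProxOn Set.univ F x q) : p = q := by
  by_contra hne
  have hC : 0 < ‖p - q‖ ^ 2 := by
    have h0 : p - q ≠ 0 := sub_ne_zero.mpr hne
    have := norm_pos_iff.mpr h0
    positivity
  have h1 := hp.2 ((1/2:ℝ) • p + (1/2:ℝ) • q) (Set.mem_univ _)
  have h2 := hq.2 p (Set.mem_univ _)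
  have hFm : F ((1/2:ℝ) • p + (1/2:ℝ) • q) ≤ (1/2) * F p + (1/2) * F q := by
    have := hF.2 (Set.mem_univ p) (Set.mem_univ q)
      (by norm_num : (0:ℝ) ≤ 1/2) (by norm_num : (0:ℝ) ≤ 1/2) (by norm_num)
    simpa using this
  have hpar : ‖p - x + (q - x)‖ ^ 2 + ‖p - q‖ ^ 2 = 2 * (‖p - x‖ ^ 2 + ‖q - x‖ ^ 2) := by
    have h := parallelogram_law_with_norm ℝ (p - x) (q - x)
    have h' : p - x - (q - x) = p - q := by abel
    rw [h'] at h
    simp only [pow_two]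
    linarith
  have hmid : (1/2:ℝ) • p + (1/2:ℝ) • q - x = (1/2:ℝ) • (p - x + (q - x)) := by module
  have hM : ‖(1/2:ℝ) • p + (1/2:ℝ) • q - x‖ ^ 2
      = (1/2) * ‖p - x‖ ^ 2 + (1/2) * ‖q - x‖ ^ 2 - (1/4) * ‖p - q‖ ^ 2 := by
    rw [hmid, norm_smul]
    simp only [Real.norm_eq_abs]
    rw [mul_pow, abs_of_nonneg (by norm_num : (0:ℝ) ≤ 1/2)]
    nlinarith [hpar]
  rw [hM] at h1
  linarith

lemma shrink_prox {n : ℕ} {e : EuclideanSpace ℝ (Fin n)} (he : ‖e‖ = 1)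
    {t s : ℝ} (ht : 0 ≤ t) (hts : t ≤ s) :
    IsProxOn Set.univ (fun v => t * ‖v‖) (s • e) ((s - t) • e) := by
  refine ⟨Set.mem_univ _, fun z _ => ?_⟩
  have hs : 0 ≤ s := le_trans ht hts
  have h1 : ‖(s - t) • e‖ = s - t := by
    rw [norm_smul, he, Real.norm_eq_abs, abs_of_nonneg (by linarith), mul_one]
  have h2 : (s - t) • e - s • e = (-t) • e := by module
  have h3 : ‖(s - t) • e - s • e‖ = t := by
    rw [h2, norm_smul, he, Real.norm_eq_abs, abs_neg, abs_of_nonneg ht, mul_one]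
  have h4 : s - ‖z‖ ≤ ‖z - s • e‖ := by
    have h5 := norm_sub_norm_le (s • e) z
    rw [norm_smul, he, Real.norm_eq_abs, abs_of_nonneg hs, mul_one, norm_sub_rev] at h5
    linarith
  have hz : (0:ℝ) ≤ ‖z‖ := norm_nonneg z
  have hd : (0:ℝ) ≤ ‖z - s • e‖ := norm_nonneg _
  simp only [h1, h3]
  rcases le_or_gt ‖z‖ s with hbs | hbs
  · have : (s - ‖z‖) ^ 2 ≤ ‖z - s • e‖ ^ 2 := by
      apply pow_le_pow_left₀ (by linarith) h4
    nlinarith [sq_nonneg (s - ‖z‖ - t)]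
  · nlinarith [mul_le_mul_of_nonneg_left hbs.le ht]

lemma gauss_Icc (m : ℕ) : (∑ k ∈ Icc 1 m, (k:ℝ)) = m * (m + 1) / 2 := by
  induction m with
  | zero => simp
  | succ m ih =>
    rw [Finset.sum_Icc_succ_top (by omega : 1 ≤ m + 1), ih]
    push_cast
    ring

set_option maxHeartbeats 1000000 in
/-- Worst-case example for DRS-gf: the ergodic primal–dual gap bound
`1/(α(K+1))` is attained; one may take `f = (√2/(α(K+1)))‖·‖`, `g = 0`,
`x⁰ = e/√2`, `u⁰ = x⁰/α`, `x̃ = ũ = 0` with `e` a unit vector. -/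
theorem drs_gf_worst_case (n K : ℕ) (hn : 0 < n) (hK : 1 ≤ K) (α : ℝ) (hα : 0 < α) :
    ∃ (Df Dg Dgs : Set (EuclideanSpace ℝ (Fin n)))
      (f g gs : EuclideanSpace ℝ (Fin n) → ℝ)
      (x0 u0 xt ut e : EuclideanSpace ℝ (Fin n)),
      IsCCP Df f ∧ IsCCP Dg g ∧ IsConjugateOn Dg g Dgs gs ∧
      xt ∈ Df ∧ ut ∈ Dgs ∧
      ‖e‖ = 1 ∧
      f = (fun v => (Real.sqrt 2 / (α * ((K : ℝ) + 1))) * ‖v‖) ∧ Df = Set.univ ∧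
      g = (fun _ => (0 : ℝ)) ∧ Dg = Set.univ ∧
      x0 = (Real.sqrt 2)⁻¹ • e ∧ u0 = α⁻¹ • x0 ∧ xt = 0 ∧ ut = 0 ∧
      ‖x0 - xt‖ ^ 2 + α ^ 2 * ‖u0 - ut‖ ^ 2 = 1 ∧
      ∀ (x u : ℕ → EuclideanSpace ℝ (Fin n)), x 0 = x0 → u 0 = u0 →
        (∀ k, IsProxOn Dgs (fun v => α⁻¹ * gs v) (u k + α⁻¹ • x k) (u (k + 1))) →
        (∀ k, IsProxOn Df (fun v => α * f v)
          (x k - α • ((2 : ℝ) • u (k + 1) - u k)) (x (k + 1))) →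
        (f ((K : ℝ)⁻¹ • ∑ k ∈ Icc 1 K, x k) +
            ⟪ut, (K : ℝ)⁻¹ • ∑ k ∈ Icc 1 K, x k⟫ - gs ut) -
          (f xt + ⟪(K : ℝ)⁻¹ • ∑ k ∈ Icc 1 K, u k, xt⟫ -
            gs ((K : ℝ)⁻¹ • ∑ k ∈ Icc 1 K, u k)) =
        1 / (α * ((K : ℝ) + 1)) := by
  have hs2 : (0:ℝ) < Real.sqrt 2 := Real.sqrt_pos.mpr (by norm_num)
  have hs2sq : Real.sqrt 2 * Real.sqrt 2 = 2 := Real.mul_self_sqrt (by norm_num)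
  have hK1 : (0:ℝ) < (K:ℝ) + 1 := by positivity
  have hKpos : (0:ℝ) < (K:ℝ) := by exact_mod_cast hK
  set c : ℝ := Real.sqrt 2 / (α * ((K : ℝ) + 1)) with hc
  have hcpos : 0 < c := by positivity
  set t : ℝ := Real.sqrt 2 / ((K : ℝ) + 1) with htdef
  have htpos : 0 < t := by positivity
  set e : EuclideanSpace ℝ (Fin n) := EuclideanSpace.single (⟨0, hn⟩ : Fin n) (1:ℝ) with hedef
  have he : ‖e‖ = 1 := by
    rw [hedef, EuclideanSpace.norm_single]; norm_num
  set x0 : EuclideanSpace ℝ (Fin n) := (Real.sqrt 2)⁻¹ • e with hx0def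
  refine ⟨Set.univ, Set.univ, {0}, fun v => c * ‖v‖, fun _ => 0, fun _ => 0,
    x0, α⁻¹ • x0, 0, 0, e, ?_, ?_, ?_, Set.mem_univ _, rfl, he, rfl, rfl, rfl, rfl,
    rfl, rfl, rfl, rfl, ?_, ?_⟩
  · -- IsCCP of f
    refine ⟨⟨0, Set.mem_univ _⟩, ?_, ?_⟩
    · exact (convexOn_norm convex_univ).smul hcpos.le
    · have h : {p : EuclideanSpace ℝ (Fin n) × ℝ | p.1 ∈ Set.univ ∧ c * ‖p.1‖ ≤ p.2}
          = {p : EuclideanSpace ℝ (Fin n) × ℝ | c * ‖p.1‖ ≤ p.2} := by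
        ext p; simp
      rw [h]
      exact isClosed_le (by fun_prop) continuous_snd
  · -- IsCCP of g
    refine ⟨⟨0, Set.mem_univ _⟩, convexOn_const 0 convex_univ, ?_⟩
    have h : {p : EuclideanSpace ℝ (Fin n) × ℝ | p.1 ∈ Set.univ ∧ (0:ℝ) ≤ p.2}
        = {p : EuclideanSpace ℝ (Fin n) × ℝ | (0:ℝ) ≤ p.2} := by
      ext p; simp
    rw [h]
    exact isClosed_le continuous_const continuous_snd
  · -- IsConjugateOn
    intro u
    constructor
    · constructor
      · intro hu
        rw [Set.mem_singleton_iff] at hu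
        subst hu
        refine ⟨0, fun r hr => ?_⟩
        obtain ⟨v, -, hv⟩ := hr
        simp only [inner_zero_left, sub_zero] at hv
        exact hv ▸ le_refl 0
      · intro ⟨b, hb⟩
        by_contra hu
        rw [Set.mem_singleton_iff] at hu
        have hun : 0 < ‖u‖ := norm_pos_iff.mpr hu
        have hb1 : ∀ r : ℝ, r * ‖u‖ ^ 2 ≤ b := by
          intro r
          have h' : ⟪u, r • u⟫ - (0:ℝ) ≤ b :=
            hb (Set.mem_image_of_mem _ (Set.mem_univ (r • u)))
          rw [real_inner_smul_right, real_inner_self_eq_norm_sq, sub_zero] at h'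
          linarith
        have := hb1 ((b + 1) / ‖u‖ ^ 2)
        rw [div_mul_cancel₀] at this
        · linarith
        · positivity
    · intro hu
      rw [Set.mem_singleton_iff] at hu
      subst hu
      have h : (fun x => ⟪(0:EuclideanSpace ℝ (Fin n)), x⟫ - (0:ℝ)) '' Set.univ = {0} := by
        ext r
        simp [inner_zero_left, eq_comm]
      rw [h]
      exact isLUB_singleton
  · -- norm identity
    have h1 : ‖x0 - 0‖ = (Real.sqrt 2)⁻¹ := by
      rw [sub_zero, hx0def, norm_smul, he, Real.norm_eq_abs,
        abs_of_nonneg (by positivity), mul_one]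
    have h2 : ‖α⁻¹ • x0 - 0‖ = α⁻¹ * (Real.sqrt 2)⁻¹ := by
      rw [sub_zero, norm_smul, hx0def, norm_smul, he, Real.norm_eq_abs, Real.norm_eq_abs,
        abs_of_nonneg (by positivity), abs_of_nonneg (by positivity), mul_one]
    rw [h1, h2]
    field_simp
    nlinarith [hs2sq]
  · -- main dynamics
    intro x u hx0 hu0 hu hxp
    have huz : ∀ k, u (k + 1) = 0 := fun k => Set.mem_singleton_iff.mp (hu k).1
    have hfeq : ∀ v : EuclideanSpace ℝ (Fin n), α * (c * ‖v‖) = t * ‖v‖ := by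
      intro v
      rw [hc, htdef]
      field_simp
    have hxp' : ∀ k, IsProxOn Set.univ (fun v => t * ‖v‖)
        (x k - α • ((2 : ℝ) • u (k + 1) - u k)) (x (k + 1)) := by
      intro k
      have h := hxp k
      simp only [hfeq] at h
      exact h
    have hconv : ConvexOn ℝ Set.univ (fun v : EuclideanSpace ℝ (Fin n) => t * ‖v‖) :=
      (convexOn_norm convex_univ).smul htpos.le
    have hX : ∀ k, k ≤ K → x (k + 1) = (Real.sqrt 2 * ((K:ℝ) - k) / ((K:ℝ) + 1)) • e := by
      intro k
      induction k with
      | zero =>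
        intro _
        have harg : x 0 - α • ((2 : ℝ) • u 1 - u 0) = Real.sqrt 2 • e := by
          rw [hx0, hu0, huz 0, hx0def]
          rw [show ((2:ℝ) • (0:EuclideanSpace ℝ (Fin n)) - α⁻¹ • ((Real.sqrt 2)⁻¹ • e))
            = (-(α⁻¹ * (Real.sqrt 2)⁻¹)) • e by module]
          rw [show (Real.sqrt 2)⁻¹ • e - α • (-(α⁻¹ * (Real.sqrt 2)⁻¹)) • e
            = ((Real.sqrt 2)⁻¹ + α * (α⁻¹ * (Real.sqrt 2)⁻¹)) • e by module]
          congr 1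
          field_simp
          nlinarith [hs2sq]
        have hsp := shrink_prox he htpos.le
          (show t ≤ Real.sqrt 2 by
            rw [htdef]
            rw [div_le_iff₀ hK1]
            nlinarith)
        have heq : x 1 = (Real.sqrt 2 - t) • e := by
          have h := hxp' 0
          rw [harg] at h
          exact prox_unique hconv h hsp
        rw [heq]
        congr 1
        rw [htdef]
        field_simp
        ring
      | succ k ih =>
        intro hk
        have hk' : k ≤ K := by omega
        have hxk := ih hk'
        have harg : x (k+1) - α • ((2 : ℝ) • u (k+2) - u (k+1)) = x (k+1) := by
          rw [huz (k+1), huz k]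
          simp
        have hKk : (1:ℝ) ≤ (K:ℝ) - k := by
          have : (k:ℝ) + 1 ≤ K := by exact_mod_cast hk
          linarith
        have hts : t ≤ Real.sqrt 2 * ((K:ℝ) - k) / ((K:ℝ) + 1) := by
          rw [htdef, div_le_div_iff₀ hK1 hK1]
          nlinarith [mul_le_mul_of_nonneg_left hKk (mul_nonneg hs2.le hK1.le)]
        have hsp := shrink_prox he htpos.le hts
        have h := hxp' (k+1)
        rw [harg, hxk] at h
        have heq := prox_unique hconv h hsp
        rw [heq]
        congr 1
        rw [htdef]
        push_cast
        field_simp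
        ring
    -- sum of x
    have hxsum : ∑ k ∈ Icc 1 K, x k = (Real.sqrt 2 * (K:ℝ) / 2) • e := by
      have hterm : ∀ k ∈ Icc 1 K,
          x k = (Real.sqrt 2 * ((K:ℝ) + 1 - k) / ((K:ℝ) + 1)) • e := by
        intro k hk
        rw [Finset.mem_Icc] at hk
        obtain ⟨j, rfl⟩ : ∃ j, k = j + 1 := ⟨k - 1, by omega⟩
        rw [hX j (by omega)]
        congr 2
        push_cast
        ring
      rw [Finset.sum_congr rfl hterm, ← Finset.sum_smul]
      congr 1
      have hgs := gauss_Icc K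
      rw [show (fun k : ℕ => Real.sqrt 2 * ((K:ℝ) + 1 - k) / ((K:ℝ) + 1))
        = (fun k : ℕ => Real.sqrt 2 / ((K:ℝ) + 1) * (((K:ℝ) + 1) - k)) by
          funext k; ring]
      rw [← Finset.mul_sum, Finset.sum_sub_distrib, Finset.sum_const, Nat.card_Icc, hgs]
      simp only [nsmul_eq_mul]
      rw [show ((K + 1 - 1 : ℕ) : ℝ) = (K:ℝ) by norm_num]
      field_simp
      ring
    -- sum of u
    have husum : ∑ k ∈ Icc 1 K, u k = 0 := by
      apply Finset.sum_eq_zero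
      intro k hk
      rw [Finset.mem_Icc] at hk
      obtain ⟨j, rfl⟩ : ∃ j, k = j + 1 := ⟨k - 1, by omega⟩
      exact huz j
    rw [hxsum, husum, smul_zero]
    have havg : (K:ℝ)⁻¹ • ((Real.sqrt 2 * (K:ℝ) / 2) • e)
        = (Real.sqrt 2 / 2) • e := by
      rw [smul_smul]
      congr 1
      field_simp
    rw [havg]
    have hnorm : ‖(Real.sqrt 2 / 2) • e‖ = Real.sqrt 2 / 2 := by
      rw [norm_smul, he, Real.norm_eq_abs, abs_of_nonneg (by positivity), mul_one]
    simp only [inner_zero_left, inner_zero_right, norm_zero, mul_zero, sub_zero, add_zero,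
      zero_add, sub_self, hnorm]
    rw [hc]
    field_simp
    nlinarith [hs2sq]
end
end

section
/- For any K ≥ 1 and α > 0, there exist closed convex proper f, g, a (1/α)-smooth convex h, and points x^0, u^0, x, u with ‖x^0 − x‖² + α²‖u^0 − u‖² = 1 such that the ergodic DYS-gf iterates satisfy L(x̄^K, u) − L(x, ū^K) = (K² − K + 1)/(αK³) > 1/(α(K+1)). -/
open Finset RealInnerProductSpace

set_option maxHeartbeats 1000000
noncomputable section

namespace DysAux

variable {n : ℕ}
local notation "E" => EuclideanSpace ℝ (Fin n)

lemma prox_norm_le (c : ℝ) (w : E) (hw : ‖w‖ ≤ c) :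
    IsProxOn Set.univ (fun v => c * ‖v‖) w 0 := by
  refine ⟨Set.mem_univ _, fun y _ => ?_⟩
  show c * ‖(0:E)‖ + (1/2) * ‖(0:E) - w‖ ^ 2 ≤ c * ‖y‖ + (1/2) * ‖y - w‖ ^ 2
  have h1 : ‖y - w‖ ^ 2 = ‖y‖ ^ 2 - 2 * ⟪y, w⟫ + ‖w‖ ^ 2 := norm_sub_sq_real y w
  have h2 : ⟪y, w⟫ ≤ ‖y‖ * ‖w‖ := real_inner_le_norm y w
  have h3 : ‖y‖ * ‖w‖ ≤ ‖y‖ * c := by nlinarith [norm_nonneg y]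
  simp only [norm_zero, mul_zero, zero_sub, norm_neg]
  nlinarith [norm_nonneg y]

lemma prox_norm_ge (c t : ℝ) (hc : 0 ≤ c) (hct : c ≤ t) (e : E) (he : ‖e‖ = 1) :
    IsProxOn Set.univ (fun v => c * ‖v‖) (t • e) ((t - c) • e) := by
  refine ⟨Set.mem_univ _, fun y _ => ?_⟩
  show c * ‖(t-c) • e‖ + (1/2) * ‖(t-c) • e - t • e‖ ^ 2
      ≤ c * ‖y‖ + (1/2) * ‖y - t • e‖ ^ 2
  have hnp : ‖(t - c) • e‖ = t - c := by
    rw [norm_smul, he, Real.norm_eq_abs, abs_of_nonneg (by linarith), mul_one]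
  have hdiff : (t - c) • e - t • e = (-c) • e := by module
  have hnd : ‖(t - c) • e - t • e‖ = c := by
    rw [hdiff, norm_smul, he, Real.norm_eq_abs, abs_neg, abs_of_nonneg hc, mul_one]
  have h1 : ‖y - t • e‖ ^ 2 = ‖y‖ ^ 2 - 2 * (t * ⟪y, e⟫) + t ^ 2 := by
    have := norm_sub_sq_real y (t • e)
    rw [real_inner_smul_right, norm_smul, Real.norm_eq_abs,
      abs_of_nonneg (by linarith : (0:ℝ) ≤ t), he, mul_one] at this
    linarith [this]
  have h2 : ⟪y, e⟫ ≤ ‖y‖ := by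
    have := real_inner_le_norm y e; rwa [he, mul_one] at this
  have h2' : t * ⟪y, e⟫ ≤ t * ‖y‖ := by nlinarith
  rw [hnp, hnd, h1]
  nlinarith [sq_nonneg (‖y‖ - t + c), norm_nonneg y]

lemma prox_norm_unique (c : ℝ) (hcnn : 0 ≤ c) (w p q : E)
    (hp : IsProxOn Set.univ (fun v => c * ‖v‖) w p)
    (hq : IsProxOn Set.univ (fun v => c * ‖v‖) w q) : p = q := by
  have h1 : c * ‖p‖ + (1/2) * ‖p - w‖ ^ 2
      ≤ c * ‖(2⁻¹ : ℝ) • (p + q)‖ + (1/2) * ‖(2⁻¹ : ℝ) • (p + q) - w‖ ^ 2 :=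
    hp.2 _ (Set.mem_univ _)
  have h2 : c * ‖q‖ + (1/2) * ‖q - w‖ ^ 2
      ≤ c * ‖(2⁻¹ : ℝ) • (p + q)‖ + (1/2) * ‖(2⁻¹ : ℝ) • (p + q) - w‖ ^ 2 :=
    hq.2 _ (Set.mem_univ _)
  have hmw : (2⁻¹ : ℝ) • (p + q) - w = (2⁻¹ : ℝ) • ((p - w) + (q - w)) := by module
  have hnm : ‖(2⁻¹ : ℝ) • (p + q) - w‖ ^ 2 = (1/4) * ‖(p-w) + (q-w)‖ ^ 2 := by
    rw [hmw, norm_smul, Real.norm_eq_abs, mul_pow]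
    norm_num
  have hpar : ‖(p-w) + (q-w)‖ ^ 2 + ‖(p-w) - (q-w)‖ ^ 2
      = 2 * ‖p-w‖ ^ 2 + 2 * ‖q-w‖ ^ 2 := by
    have := parallelogram_law_with_norm ℝ (p-w) (q-w)
    linarith [this]
  have hpq : (p-w) - (q-w) = p - q := by module
  rw [hpq] at hpar
  have hmn : ‖(2⁻¹ : ℝ) • (p + q)‖ ≤ 2⁻¹ * ‖p‖ + 2⁻¹ * ‖q‖ := by
    rw [norm_smul, Real.norm_eq_abs]
    have := norm_add_le p q
    rw [abs_of_nonneg (by norm_num : (0:ℝ) ≤ 2⁻¹)]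
    linarith
  have hcm : c * ‖(2⁻¹ : ℝ) • (p + q)‖ ≤ 2⁻¹ * (c * ‖p‖) + 2⁻¹ * (c * ‖q‖) := by
    nlinarith [norm_nonneg ((2⁻¹ : ℝ) • (p + q))]
  have hz : ‖p - q‖ ^ 2 ≤ 0 := by linarith
  have : ‖p - q‖ = 0 := by nlinarith [norm_nonneg (p - q)]
  rwa [norm_eq_zero, sub_eq_zero] at this

lemma grad_sq (α : ℝ) (hα : 0 < α) (z : E) :
    HasGradientAt (fun v : E => ‖v‖ ^ 2 / (2 * α)) (α⁻¹ • z) z := by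
  rw [hasGradientAt_iff_hasFDerivAt]
  have h0 : HasFDerivAt (fun t : E => ⟪t, t⟫)
      ((fderivInnerCLM ℝ (z, z)).comp ((ContinuousLinearMap.id ℝ E).prod
        (ContinuousLinearMap.id ℝ E))) z :=
    (hasFDerivAt_id z).inner ℝ (hasFDerivAt_id z)
  have h1 := h0.mul_const (2 * α)⁻¹
  have hfun : (fun t : E => ⟪t, t⟫ * (2 * α)⁻¹) = fun v : E => ‖v‖ ^ 2 / (2 * α) := by
    funext v
    rw [real_inner_self_eq_norm_sq, div_eq_mul_inv]
  rw [hfun] at h1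
  convert h1 using 1
  · rfl
  ext v
  simp [InnerProductSpace.toDual_apply_apply, real_inner_smul_left, fderivInnerCLM_apply,
    real_inner_comm]
  field_simp
  have hsym : ∑ x : Fin n, v x * z x = ∑ x : Fin n, z x * v x :=
    Finset.sum_congr rfl fun i _ => mul_comm _ _
  ring

lemma conj_ball (η : ℝ) (hη : 0 ≤ η) (u : E) :
    (u ∈ (Set.univ : Set E) ↔
      BddAbove ((fun x => ⟪u, x⟫ - (0:ℝ)) '' Metric.closedBall 0 η)) ∧
    (u ∈ (Set.univ : Set E) →
      IsLUB ((fun x => ⟪u, x⟫ - (0:ℝ)) '' Metric.closedBall 0 η) (η * ‖u‖)) := by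
  have hub : ∀ b ∈ (fun x : E => ⟪u, x⟫ - (0:ℝ)) '' Metric.closedBall 0 η, b ≤ η * ‖u‖ := by
    rintro b ⟨x, hx, rfl⟩
    rw [Metric.mem_closedBall, dist_zero_right] at hx
    have h1 : ⟪u, x⟫ ≤ ‖u‖ * ‖x‖ := real_inner_le_norm u x
    have h2 : ‖u‖ * ‖x‖ ≤ ‖u‖ * η := by nlinarith [norm_nonneg u]
    simp only [sub_zero]
    nlinarith
  constructor
  · exact ⟨fun _ => ⟨η * ‖u‖, hub⟩, fun _ => trivial⟩
  · intro _
    refine ⟨hub, fun b hb => ?_⟩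
    rcases eq_or_ne u 0 with rfl | hu
    · have : (0:ℝ) ∈ (fun x : E => ⟪(0:E), x⟫ - (0:ℝ)) '' Metric.closedBall 0 η := by
        refine ⟨0, ?_, by simp⟩
        simp [hη]
      have := hb this
      simpa using this
    · have hun : 0 < ‖u‖ := norm_pos_iff.mpr hu
      have hmem : η * ‖u‖ ∈ (fun x : E => ⟪u, x⟫ - (0:ℝ)) '' Metric.closedBall 0 η := by
        refine ⟨(η / ‖u‖) • u, ?_, ?_⟩
        · rw [Metric.mem_closedBall, dist_zero_right, norm_smul, Real.norm_eq_abs,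
            abs_of_nonneg (by positivity)]
          field_simp
          exact le_rfl
        · show (inner ℝ u ((η / ‖u‖) • u) : ℝ) - 0 = η * ‖u‖
          rw [real_inner_smul_right, real_inner_self_eq_norm_sq]
          field_simp
          ring
      exact hb hmem

lemma convexOn_hquad (α : ℝ) (hα : 0 < α) :
    ConvexOn ℝ (Set.univ : Set E) (fun v : E => ‖v‖ ^ 2 / (2 * α)) := by
  refine ⟨convex_univ, fun x _ y _ a b ha hb hab => ?_⟩
  have h1 : ‖a • x + b • y‖ ≤ a * ‖x‖ + b * ‖y‖ := by
    calc ‖a • x + b • y‖ ≤ ‖a • x‖ + ‖b • y‖ := norm_add_le _ _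
      _ = a * ‖x‖ + b * ‖y‖ := by
          rw [norm_smul, norm_smul, Real.norm_eq_abs, Real.norm_eq_abs,
            abs_of_nonneg ha, abs_of_nonneg hb]
  have h2 : ‖a • x + b • y‖ ^ 2 ≤ a * ‖x‖ ^ 2 + b * ‖y‖ ^ 2 := by
    nlinarith [norm_nonneg (a • x + b • y), norm_nonneg x, norm_nonneg y,
      sq_nonneg (‖x‖ - ‖y‖), mul_nonneg ha hb]
  show ‖a • x + b • y‖ ^ 2 / (2 * α) ≤ a * (‖x‖ ^ 2 / (2 * α)) + b * (‖y‖ ^ 2 / (2 * α))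
  have hre : a * (‖x‖ ^ 2 / (2 * α)) + b * (‖y‖ ^ 2 / (2 * α))
      = (a * ‖x‖ ^ 2 + b * ‖y‖ ^ 2) / (2 * α) := by ring
  rw [hre]
  gcongr

lemma gauss_sum (K : ℕ) : ∑ k ∈ Icc 1 K, ((K:ℝ) - k) = K * (K - 1) / 2 := by
  induction K with
  | zero => simp
  | succ K ih =>
    rw [Finset.sum_Icc_succ_top (Nat.le_add_left 1 K)]
    push_cast
    have h : ∑ k ∈ Icc 1 K, ((K:ℝ) + 1 - k) = ∑ k ∈ Icc 1 K, (((K:ℝ) - k) + 1) :=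
      Finset.sum_congr rfl fun i _ => by ring
    rw [show ∑ k ∈ Icc 1 K, ((K:ℝ) + 1 - (k:ℝ)) = ∑ k ∈ Icc 1 K, (((K:ℝ) - k) + 1) from h,
      Finset.sum_add_distrib, ih, Finset.sum_const, Nat.card_Icc]
    simp
    ring

end DysAux
open DysAux in
/-- Bad example for DYS-gf: there are CCP `f, g`, a `(1/α)`-smooth convex `h`, and
initial/reference points with `‖x⁰−x‖² + α²‖u⁰−u‖² = 1`, such that the ergodic
primal–dual gap equals `(K²−K+1)/(αK³) > 1/(α(K+1))`. -/
theorem dys_gf_bad_example (n K : ℕ) (hn : 0 < n) (hK : 1 ≤ K) (α : ℝ) (hα : 0 < α) :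
    ∃ (Df Dg Dgs : Set (EuclideanSpace ℝ (Fin n)))
      (f g gs h : EuclideanSpace ℝ (Fin n) → ℝ)
      (gh : EuclideanSpace ℝ (Fin n) → EuclideanSpace ℝ (Fin n))
      (x0 u0 xt ut : EuclideanSpace ℝ (Fin n)),
      IsCCP Df f ∧ IsCCP Dg g ∧ IsConjugateOn Dg g Dgs gs ∧
      ConvexOn ℝ Set.univ h ∧ (∀ z, HasGradientAt h (gh z) z) ∧
      (∀ z w, ‖gh z - gh w‖ ≤ α⁻¹ * ‖z - w‖) ∧
      xt ∈ Df ∧ ut ∈ Dgs ∧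
      ‖x0 - xt‖ ^ 2 + α ^ 2 * ‖u0 - ut‖ ^ 2 = 1 ∧
      (∀ (x u : ℕ → EuclideanSpace ℝ (Fin n)), x 0 = x0 → u 0 = u0 →
        (∀ k, IsProxOn Dgs (fun v => α⁻¹ * gs v) (u k + α⁻¹ • x k) (u (k + 1))) →
        (∀ k, IsProxOn Df (fun v => α * f v)
          (x k - α • ((2 : ℝ) • u (k + 1) - u k) -
            α • gh (x k + α • (u k - u (k + 1)))) (x (k + 1))) →
        (f ((K : ℝ)⁻¹ • ∑ k ∈ Icc 1 K, x k) + h ((K : ℝ)⁻¹ • ∑ k ∈ Icc 1 K, x k) +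
            ⟪ut, (K : ℝ)⁻¹ • ∑ k ∈ Icc 1 K, x k⟫ - gs ut) -
          (f xt + h xt + ⟪(K : ℝ)⁻¹ • ∑ k ∈ Icc 1 K, u k, xt⟫ -
            gs ((K : ℝ)⁻¹ • ∑ k ∈ Icc 1 K, u k)) =
        ((K : ℝ) ^ 2 - K + 1) / (α * (K : ℝ) ^ 3)) ∧
      ((K : ℝ) ^ 2 - K + 1) / (α * (K : ℝ) ^ 3) > 1 / (α * ((K : ℝ) + 1)) := by
  classical
  have hs0 : (0:ℝ) < Real.sqrt 2 := Real.sqrt_pos.mpr (by norm_num)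
  have hs2 : Real.sqrt 2 ^ 2 = 2 := Real.sq_sqrt (by norm_num)
  set s : ℝ := Real.sqrt 2 with hs_def
  have hKr : (1:ℝ) ≤ (K:ℝ) := by exact_mod_cast hK
  have hKp : (0:ℝ) < (K:ℝ) := by linarith
  have hKne : ((K:ℝ)) ≠ 0 := ne_of_gt hKp
  have hαne : α ≠ 0 := ne_of_gt hα
  set e : EuclideanSpace ℝ (Fin n) := EuclideanSpace.single (⟨0, hn⟩ : Fin n) (1:ℝ)
    with he_def
  have he : ‖e‖ = 1 := by
    rw [he_def, EuclideanSpace.norm_single]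
    norm_num
  set η : ℝ := s * ((K:ℝ) - 1) / (K:ℝ) ^ 2 with hη_def
  have hη : 0 ≤ η := by
    apply div_nonneg (mul_nonneg hs0.le (by linarith)) (by positivity)
  set cf : ℝ := ((K:ℝ) - 1) * η with hcf_def
  have hcf : 0 ≤ cf := mul_nonneg (by linarith) hη
  refine ⟨Set.univ, Metric.closedBall 0 η, Set.univ,
    (fun v => (cf / α) * ‖v‖), (fun _ => 0), (fun v => η * ‖v‖),
    (fun v => ‖v‖ ^ 2 / (2 * α)), (fun v => α⁻¹ • v),
    ((s / 2) • e), ((s / (2 * α)) • e), 0, 0, ?_, ?_, ?_, ?_, ?_, ?_, ?_, ?_, ?_, ?_, ?_⟩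
  · -- IsCCP univ f
    refine ⟨⟨0, trivial⟩, ?_, ?_⟩
    · have hc : 0 ≤ cf / α := div_nonneg hcf hα.le
      refine ⟨convex_univ, fun x _ y _ a b ha hb hab => ?_⟩
      show (cf / α) * ‖a • x + b • y‖ ≤ a * ((cf / α) * ‖x‖) + b * ((cf / α) * ‖y‖)
      have h1 : ‖a • x + b • y‖ ≤ a * ‖x‖ + b * ‖y‖ := by
        calc ‖a • x + b • y‖ ≤ ‖a • x‖ + ‖b • y‖ := norm_add_le _ _
          _ = a * ‖x‖ + b * ‖y‖ := by
              rw [norm_smul, norm_smul, Real.norm_eq_abs, Real.norm_eq_abs,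
                abs_of_nonneg ha, abs_of_nonneg hb]
      nlinarith [norm_nonneg x, norm_nonneg y]
    · have hset : {p : EuclideanSpace ℝ (Fin n) × ℝ |
          p.1 ∈ Set.univ ∧ (cf / α) * ‖p.1‖ ≤ p.2}
          = {p : EuclideanSpace ℝ (Fin n) × ℝ | (cf / α) * ‖p.1‖ ≤ p.2} := by
        ext p; simp
      rw [hset]
      exact isClosed_le (continuous_const.mul continuous_fst.norm) continuous_snd
  · -- IsCCP closedBall g
    refine ⟨⟨0, by simp [hη]⟩, convexOn_const 0 (convex_closedBall _ _), ?_⟩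
    have hset : {p : EuclideanSpace ℝ (Fin n) × ℝ |
        p.1 ∈ Metric.closedBall 0 η ∧ (0:ℝ) ≤ p.2}
        = (Prod.fst ⁻¹' Metric.closedBall 0 η) ∩ {p : EuclideanSpace ℝ (Fin n) × ℝ | 0 ≤ p.2} := by
      ext p; simp [Set.mem_inter_iff]
    rw [hset]
    exact (Metric.isClosed_closedBall.preimage continuous_fst).inter
      (isClosed_le continuous_const continuous_snd)
  · -- conjugate
    intro v
    exact conj_ball η hη v
  · exact convexOn_hquad α hα
  · exact fun z => grad_sq α hα z
  · intro z w
    show ‖α⁻¹ • z - α⁻¹ • w‖ ≤ α⁻¹ * ‖z - w‖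
    rw [← smul_sub, norm_smul, Real.norm_eq_abs, abs_of_pos (inv_pos.mpr hα)]
  · trivial
  · trivial
  · -- norm condition
    rw [sub_zero, sub_zero, norm_smul, norm_smul, he, Real.norm_eq_abs, Real.norm_eq_abs,
      abs_of_pos (by positivity : (0:ℝ) < s / 2),
      abs_of_pos (by positivity : (0:ℝ) < s / (2 * α))]
    field_simp
    nlinarith [hs2]
  · -- main computation
    intro x u hx0 hu0 hu hx
    -- normalize the u-prox hypotheses
    have hu' : ∀ k, IsProxOn Set.univ (fun v => (α⁻¹ * η) * ‖v‖)
        (u k + α⁻¹ • x k) (u (k + 1)) := by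
      intro k
      obtain ⟨hm, hmin⟩ := hu k
      refine ⟨Set.mem_univ _, fun y hy => ?_⟩
      have h := hmin y hy
      simp only [mul_assoc] at h ⊢
      exact h
    -- simplify the argument of the x-prox
    have harg : ∀ k, x k - α • ((2:ℝ) • u (k+1) - u k) -
        α • (α⁻¹ • (x k + α • (u k - u (k+1)))) = (-α) • u (k+1) := by
      intro k
      rw [smul_smul, mul_inv_cancel₀ hαne, one_smul]
      module
    have hx' : ∀ k, IsProxOn Set.univ (fun v => cf * ‖v‖)
        ((-α) • u (k+1)) (x (k+1)) := by
      intro k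
      obtain ⟨hm, hmin⟩ := hx k
      have heq : ∀ v : EuclideanSpace ℝ (Fin n), α * ((cf / α) * ‖v‖) = cf * ‖v‖ := by
        intro v; field_simp
      refine ⟨Set.mem_univ _, fun y hy => ?_⟩
      have h := hmin y hy
      simp only [heq] at h
      rw [harg k] at h
      exact h
    have hcu : (0:ℝ) ≤ α⁻¹ * η := mul_nonneg (inv_pos.mpr hα).le hη
    -- generic steps
    have ustep : ∀ k (t : ℝ), α⁻¹ * η ≤ t → u k + α⁻¹ • x k = t • e →
        u (k+1) = (t - α⁻¹ * η) • e := by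
      intro k t ht hw
      have h := hu' k
      rw [hw] at h
      exact prox_norm_unique _ hcu _ _ _ h (prox_norm_ge _ t hcu ht e he)
    have xzero : ∀ k (c : ℝ), 0 ≤ c → α * c ≤ cf → u (k+1) = c • e →
        x (k+1) = 0 := by
      intro k c hc hbound huk
      have h := hx' k
      rw [huk, smul_smul] at h
      refine prox_norm_unique cf hcf _ _ _ h (prox_norm_le cf _ ?_)
      rw [norm_smul, Real.norm_eq_abs, he, mul_one, abs_mul, abs_neg,
        abs_of_pos hα, abs_of_nonneg hc]
      exact hbound
    -- step 1 : u 1 and x 1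
    have hw0 : u 0 + α⁻¹ • x 0 = (s / α) • e := by
      rw [hu0, hx0, smul_smul, ← add_smul]
      congr 1
      field_simp
      ring
    have hηs : η ≤ s := by
      rw [hη_def, div_le_iff₀ (by positivity)]
      nlinarith [hs0, hKr]
    have hcut0 : α⁻¹ * η ≤ s / α := by
      rw [div_eq_inv_mul]
      exact mul_le_mul_of_nonneg_left hηs (inv_pos.mpr hα).le
    have hu1 : u 1 = (s / α - α⁻¹ * η) • e := ustep 0 (s / α) hcut0 hw0
    have hU1val : s / α - α⁻¹ * η = s * ((K:ℝ)^2 - K + 1) / (α * (K:ℝ)^2) := by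
      rw [hη_def]
      field_simp
      ring
    have hU1pos : 0 ≤ s / α - α⁻¹ * η := by
      rw [hU1val]
      have h1 : (0:ℝ) ≤ (K:ℝ)^2 - K + 1 := by nlinarith
      exact div_nonneg (mul_nonneg hs0.le h1) (by positivity)
    -- x 1 via prox_norm_ge on -e
    have hx1 : x 1 = (-(s / (K:ℝ))) • e := by
      have h := hx' 0
      rw [hu1, smul_smul] at h
      have hre : (-α * (s / α - α⁻¹ * η)) • e
          = (α * (s / α - α⁻¹ * η)) • (-e) := by
        rw [smul_neg, ← neg_smul]
        congr 1
        ring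
      rw [hre] at h
      have hne : ‖(-e : EuclideanSpace ℝ (Fin n))‖ = 1 := by rw [norm_neg, he]
      have hbound : cf ≤ α * (s / α - α⁻¹ * η) := by
        rw [← sub_nonneg]
        have hd : α * (s / α - α⁻¹ * η) - cf = s / (K:ℝ) := by
          rw [hcf_def, hη_def]
          field_simp
          ring
        rw [hd]
        positivity
      have h2 := prox_norm_ge cf (α * (s / α - α⁻¹ * η)) hcf hbound
        (-e) hne
      have := prox_norm_unique cf hcf _ _ _ h h2
      rw [this, smul_neg, ← neg_smul]
      congr 1
      rw [hcf_def, hη_def]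
      field_simp
      ring
    -- the inductive computation for 2 ≤ k ≤ K
    have key : ∀ k, 2 ≤ k → k ≤ K →
        u k = (s * ((K:ℝ) - 1) * ((K:ℝ) - k) / (α * (K:ℝ)^2)) • e ∧ x k = 0 := by
      intro k hk2
      induction k, hk2 using Nat.le_induction with
      | base =>
        intro hK2
        have hK2r : (2:ℝ) ≤ (K:ℝ) := by exact_mod_cast hK2
        have hw1 : u 1 + α⁻¹ • x 1 = (s * ((K:ℝ) - 1)^2 / (α * (K:ℝ)^2)) • e := by
          rw [hu1, hx1, smul_smul, ← add_smul]
          congr 1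
          rw [hη_def]
          field_simp
          ring
        have hc2 : s * ((K:ℝ) - 1)^2 / (α * (K:ℝ)^2) - α⁻¹ * η
            = s * ((K:ℝ) - 1) * ((K:ℝ) - 2) / (α * (K:ℝ)^2) := by
          rw [hη_def]
          field_simp
          ring
        have hc2nn : (0:ℝ) ≤ s * ((K:ℝ) - 1) * ((K:ℝ) - 2) / (α * (K:ℝ)^2) := by
          have h1 : (0:ℝ) ≤ (K:ℝ) - 1 := by linarith
          have h2 : (0:ℝ) ≤ (K:ℝ) - 2 := by linarith
          exact div_nonneg (mul_nonneg (mul_nonneg hs0.le h1) h2) (by positivity)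
        have hcut : α⁻¹ * η ≤ s * ((K:ℝ) - 1)^2 / (α * (K:ℝ)^2) := by
          rw [← sub_nonneg, hc2]
          exact hc2nn
        have hu2 := ustep 1 _ hcut hw1
        rw [hc2] at hu2
        have hbound : α * (s * ((K:ℝ) - 1) * ((K:ℝ) - 2) / (α * (K:ℝ)^2)) ≤ cf := by
          rw [← sub_nonneg]
          have hd : cf - α * (s * ((K:ℝ) - 1) * ((K:ℝ) - 2) / (α * (K:ℝ)^2))
              = s * ((K:ℝ) - 1) / (K:ℝ)^2 := by
            rw [hcf_def, hη_def]
            field_simp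
            ring
          rw [hd]
          have h1 : (0:ℝ) ≤ (K:ℝ) - 1 := by linarith
          exact div_nonneg (mul_nonneg hs0.le h1) (by positivity)
        refine ⟨?_, xzero 1 _ hc2nn hbound hu2⟩
        rw [hu2]
        norm_num
      | succ k hk ih =>
        intro hk1K
        have hkK : k ≤ K := le_trans (Nat.le_succ k) hk1K
        obtain ⟨huk, hxk⟩ := ih hkK
        have hk2r : (2:ℝ) ≤ (k:ℝ) := by exact_mod_cast hk
        have hk1Kr : (k:ℝ) + 1 ≤ (K:ℝ) := by exact_mod_cast hk1K
        have hw : u k + α⁻¹ • x k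
            = (s * ((K:ℝ) - 1) * ((K:ℝ) - k) / (α * (K:ℝ)^2)) • e := by
          rw [huk, hxk, smul_zero, add_zero]
        have hc : s * ((K:ℝ) - 1) * ((K:ℝ) - k) / (α * (K:ℝ)^2) - α⁻¹ * η
            = s * ((K:ℝ) - 1) * ((K:ℝ) - ((k:ℝ)+1)) / (α * (K:ℝ)^2) := by
          rw [hη_def]
          field_simp
          ring
        have hcnn : (0:ℝ) ≤ s * ((K:ℝ) - 1) * ((K:ℝ) - ((k:ℝ)+1)) / (α * (K:ℝ)^2) := by
          have h1 : (0:ℝ) ≤ (K:ℝ) - 1 := by linarith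
          have h2 : (0:ℝ) ≤ (K:ℝ) - ((k:ℝ)+1) := by linarith
          exact div_nonneg (mul_nonneg (mul_nonneg hs0.le h1) h2) (by positivity)
        have hcut : α⁻¹ * η ≤ s * ((K:ℝ) - 1) * ((K:ℝ) - k) / (α * (K:ℝ)^2) := by
          rw [← sub_nonneg, hc]
          exact hcnn
        have huk1 := ustep k _ hcut hw
        rw [hc] at huk1
        have hbound : α * (s * ((K:ℝ) - 1) * ((K:ℝ) - ((k:ℝ)+1)) / (α * (K:ℝ)^2)) ≤ cf := by
          rw [← sub_nonneg]
          have hd : cf - α * (s * ((K:ℝ) - 1) * ((K:ℝ) - ((k:ℝ)+1)) / (α * (K:ℝ)^2))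
              = s * ((K:ℝ) - 1) * (k:ℝ) / (K:ℝ)^2 := by
            rw [hcf_def, hη_def]
            field_simp
            ring
          rw [hd]
          have h1 : (0:ℝ) ≤ (K:ℝ) - 1 := by linarith
          have h3 : (0:ℝ) ≤ (k:ℝ) := by positivity
          exact div_nonneg (mul_nonneg (mul_nonneg hs0.le h1) h3) (by positivity)
        refine ⟨?_, xzero k _ hcnn hbound huk1⟩
        rw [huk1]
        push_cast
        ring_nf
    -- the sums
    have hxsum : ∑ k ∈ Icc 1 K, x k = (-(s / (K:ℝ))) • e := by
      rw [Finset.sum_eq_single_of_mem 1 (by simp [hK]) ?_]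
      · exact hx1
      · intro b hb hb1
        rw [Finset.mem_Icc] at hb
        exact (key b (by omega) hb.2).2
    have hSnn : (0:ℝ) ≤ s * ((K:ℝ) - 1) / (α * (K:ℝ)^2) * ((K:ℝ) * ((K:ℝ) - 1) / 2)
        + s * (K:ℝ) / (α * (K:ℝ)^2) := by
      have h1 : (0:ℝ) ≤ (K:ℝ) - 1 := by linarith
      positivity
    have husum : ∑ k ∈ Icc 1 K, u k
        = (s * ((K:ℝ) - 1) / (α * (K:ℝ)^2) * ((K:ℝ) * ((K:ℝ) - 1) / 2)
            + s * (K:ℝ) / (α * (K:ℝ)^2)) • e := by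
      have hucoef : ∀ k ∈ Icc 1 K, u k
          = ((s * ((K:ℝ) - 1) / (α * (K:ℝ)^2)) * ((K:ℝ) - k)
              + (if k = 1 then s * (K:ℝ) / (α * (K:ℝ)^2) else 0)) • e := by
        intro k hk
        rw [Finset.mem_Icc] at hk
        by_cases h1 : k = 1
        · subst h1
          rw [hu1, if_pos rfl, hU1val]
          congr 1
          push_cast
          field_simp
          ring
        · rw [(key k (by omega) hk.2).1, if_neg h1, add_zero]
          congr 1
          ring
      rw [Finset.sum_congr rfl hucoef, ← Finset.sum_smul]
      congr 1
      rw [Finset.sum_add_distrib, ← Finset.mul_sum, gauss_sum,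
        Finset.sum_ite_eq' (Icc 1 K) 1 (fun _ => s * (K:ℝ) / (α * (K:ℝ)^2)),
        if_pos (by simp [hK])]
    -- final evaluation
    rw [hxsum, husum]
    have hnx : ‖(K:ℝ)⁻¹ • ((-(s / (K:ℝ))) • e)‖ = s / (K:ℝ)^2 := by
      rw [smul_smul]
      have hco : (K:ℝ)⁻¹ * (-(s / (K:ℝ))) = -(s / (K:ℝ)^2) := by
        field_simp
      rw [hco, norm_smul, Real.norm_eq_abs, abs_neg,
        abs_of_nonneg (by positivity), he, mul_one]
    have hnu : ‖(K:ℝ)⁻¹ • ((s * ((K:ℝ) - 1) / (α * (K:ℝ)^2) * ((K:ℝ) * ((K:ℝ) - 1) / 2)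
        + s * (K:ℝ) / (α * (K:ℝ)^2)) • e)‖
        = (K:ℝ)⁻¹ * (s * ((K:ℝ) - 1) / (α * (K:ℝ)^2) * ((K:ℝ) * ((K:ℝ) - 1) / 2)
            + s * (K:ℝ) / (α * (K:ℝ)^2)) := by
      rw [smul_smul, norm_smul, Real.norm_eq_abs, he, mul_one,
        abs_of_nonneg (mul_nonneg (inv_nonneg.mpr hKp.le) hSnn)]
    simp only [inner_zero_left, inner_zero_right, norm_zero, mul_zero, zero_add,
      add_zero, sub_zero, zero_sub, zero_pow, zero_div, ne_eq, OfNat.ofNat_ne_zero,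
      not_false_eq_true]
    rw [hnx, hnu, hcf_def, hη_def]
    field_simp
    linear_combination ((K:ℝ) - (K:ℝ)^2 + (K:ℝ)^3) * hs2
  · -- final inequality
    rw [gt_iff_lt, div_lt_div_iff₀ (by positivity) (by positivity)]
    nlinarith [hKp, hKr, hα]
end
end

section
/- Let f, g, h be closed convex proper on R^n with h differentiable and L-smooth (L > 0), and α = 1/L. The DYS-gf ergodic iterates satisfy L(x̄^K, u) − L(x, ū^K) ≤ (1/(αK))(‖x^0 − x‖² + α²‖u^0 − u‖²) for all x ∈ dom f, u ∈ dom g*, where L(x,u) = f(x) + h(x) + ⟨u,x⟩ − g*(u). -/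
open Finset RealInnerProductSpace

noncomputable section

section Auxiliary

variable {E : Type*} [NormedAddCommGroup E] [InnerProductSpace ℝ E]

lemma prox_fo {D : Set E} {φ : E → ℝ} (hφ : ConvexOn ℝ D φ) {w p : E} (hpD : p ∈ D)
    (hmin : ∀ y ∈ D, φ p + (1/2)*‖p-w‖^2 ≤ φ y + (1/2)*‖y-w‖^2) :
    ∀ v ∈ D, φ p + ⟪w - p, v - p⟫ ≤ φ v := by
  intro v hv
  have key : ∀ t : ℝ, 0 < t → t ≤ 1 → ⟪w - p, v - p⟫ - t/2*‖v-p‖^2 ≤ φ v - φ p := by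
    intro t ht0 ht1
    have hq : p + t • (v - p) ∈ D := by
      have := hφ.1 hpD hv (by linarith : (0:ℝ) ≤ 1 - t) ht0.le (by ring)
      convert this using 1
      module
    have hconv : φ (p + t • (v - p)) ≤ (1-t) * φ p + t * φ v := by
      have := hφ.2 hpD hv (by linarith : (0:ℝ) ≤ 1 - t) ht0.le (by ring)
      calc φ (p + t • (v - p)) = φ ((1-t) • p + t • v) := by congr 1; module
        _ ≤ (1-t) * φ p + t * φ v := this
    have hm := hmin _ hq
    have hexp : ‖p + t • (v - p) - w‖^2
        = ‖p - w‖^2 + 2*t*⟪p - w, v - p⟫ + t^2*‖v-p‖^2 := by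
      have : p + t • (v - p) - w = (p - w) + t • (v - p) := by module
      rw [this, norm_add_sq_real, real_inner_smul_right, norm_smul]
      simp [mul_pow, abs_of_pos ht0]
      ring
    have hip : ⟪w - p, v - p⟫ = -⟪p - w, v - p⟫ := by
      rw [show w - p = -(p - w) by module, inner_neg_left]
    rw [hip]
    have h1 : 0 ≤ (φ v - φ p) * t + t*⟪p - w, v - p⟫ + t^2/2*‖v-p‖^2 := by
      nlinarith [hm, hconv, hexp]
    have := mul_le_mul_of_nonneg_right (le_refl (0:ℝ)) ht0.le
    nlinarith [h1, ht0]
  have : ⟪w - p, v - p⟫ ≤ φ v - φ p := by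
    apply le_of_forall_pos_le_add
    intro ε hε
    rcases le_or_gt (‖v-p‖^2) 0 with hn | hn
    · have := key 1 one_pos le_rfl
      nlinarith
    · set t := min 1 (2*ε/‖v-p‖^2) with htdef
      have ht0 : 0 < t := lt_min one_pos (by positivity)
      have ht1 : t ≤ 1 := min_le_left _ _
      have := key t ht0 ht1
      have h2 : t/2*‖v-p‖^2 ≤ ε := by
        have : t ≤ 2*ε/‖v-p‖^2 := min_le_right _ _
        calc t/2*‖v-p‖^2 ≤ (2*ε/‖v-p‖^2)/2*‖v-p‖^2 := by nlinarith
          _ = ε := by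
            have hne : ‖v-p‖ ≠ 0 := fun h0 => by simp [h0] at hn
            field_simp
      linarith
  linarith

variable [CompleteSpace E]

lemma grad_line_deriv {h : E → ℝ} {gh : E → E} (hgrad : ∀ z, HasGradientAt h (gh z) z)
    (z d : E) (t : ℝ) :
    HasDerivAt (fun s : ℝ => h (z + s • d)) ⟪gh (z + t • d), d⟫ t := by
  have hc : HasDerivAt (fun s : ℝ => z + s • d) d t := by
    simpa using ((hasDerivAt_id t).smul_const d).const_add z
  have hF := (hgrad (z + t • d)).hasFDerivAt
  have := hF.comp_hasDerivAt t hc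
  simpa [InnerProductSpace.toDual_apply_apply, Function.comp_def] using this

lemma convex_fo {h : E → ℝ} {gh : E → E} (hh : ConvexOn ℝ Set.univ h)
    (hgrad : ∀ z, HasGradientAt h (gh z) z) (z y : E) :
    h z + ⟪gh z, y - z⟫ ≤ h y := by
  set d := y - z with hd
  set φ : ℝ → ℝ := fun s => h (z + s • d) with hφ
  have hφ0 : φ 0 = h z := by show h (z + (0:ℝ) • d) = h z; congr 1; module
  have hφ1 : φ 1 = h y := by show h (z + (1:ℝ) • d) = h y; congr 1; rw [hd]; module
  have hder : HasDerivAt φ ⟪gh z, d⟫ 0 := by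
    have := grad_line_deriv hgrad z d 0
    simpa using this
  have hslope : Filter.Tendsto (slope φ 0) (nhdsWithin 0 (Set.Ioi 0)) (nhds ⟪gh z, d⟫) := by
    have := hasDerivAt_iff_tendsto_slope.1 hder
    exact this.mono_left (nhdsWithin_mono 0 (fun t ht => ne_of_gt ht))
  have hle : ⟪gh z, d⟫ ≤ φ 1 - φ 0 := by
    apply le_of_tendsto hslope
    filter_upwards [Ioc_mem_nhdsGT_of_mem (Set.left_mem_Ico.2 one_pos)] with t ht
    have ht0 : 0 < t := ht.1
    have ht1 : t ≤ 1 := ht.2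
    have hcv : φ t ≤ (1-t) * φ 0 + t * φ 1 := by
      have h2 := hh.2 (Set.mem_univ z) (Set.mem_univ y)
        (by linarith : (0:ℝ) ≤ 1 - t) ht0.le (by ring)
      rw [smul_eq_mul, smul_eq_mul] at h2
      rw [hφ0, hφ1]
      calc φ t = h ((1-t) • z + t • y) := by show h (z + t • d) = _; congr 1; rw [hd]; module
        _ ≤ (1-t) * h z + t * h y := h2
    rw [slope_def_field]
    have : (φ t - φ 0) / t ≤ φ 1 - φ 0 := by
      rw [div_le_iff₀ ht0]; nlinarith
    simpa [div_eq_inv_mul] using this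
  rw [hφ0, hφ1] at hle; linarith

lemma descent_lemma {h : E → ℝ} {gh : E → E} {L : ℝ} (hL : 0 < L)
    (hgrad : ∀ z, HasGradientAt h (gh z) z)
    (hlip : ∀ z w, ‖gh z - gh w‖ ≤ L * ‖z - w‖) (z y : E) :
    h y ≤ h z + ⟪gh z, y - z⟫ + L/2 * ‖y - z‖^2 := by
  set d := y - z with hd
  have hghcont : Continuous gh := by
    have : LipschitzWith L.toNNReal gh := by
      apply LipschitzWith.of_dist_le_mul
      intro a b
      rw [dist_eq_norm, dist_eq_norm]
      calc ‖gh a - gh b‖ ≤ L * ‖a - b‖ := hlip a b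
        _ ≤ L.toNNReal * ‖a - b‖ := by
            have : (L : ℝ) ≤ L.toNNReal := Real.le_coe_toNNReal L
            have hn : (0:ℝ) ≤ ‖a - b‖ := norm_nonneg _
            nlinarith
    exact this.continuous
  set φ' : ℝ → ℝ := fun t => ⟪gh (z + t • d), d⟫ with hφ'
  have hcont : Continuous φ' := by
    apply Continuous.inner
    · exact hghcont.comp (continuous_const.add (continuous_id.smul continuous_const))
    · exact continuous_const
  have hftc : ∫ t in (0:ℝ)..1, φ' t = h (z + (1:ℝ) • d) - h (z + (0:ℝ) • d) := by
    have := intervalIntegral.integral_eq_sub_of_hasDerivAt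
      (f := fun s : ℝ => h (z + s • d)) (f' := φ')
      (fun t _ => grad_line_deriv hgrad z d t)
      (hcont.intervalIntegrable 0 1)
    exact this
  have hbound : ∫ t in (0:ℝ)..1, φ' t ≤ ∫ t in (0:ℝ)..1, (⟪gh z, d⟫ + L * t * ‖d‖^2) := by
    apply intervalIntegral.integral_mono_on (by norm_num)
      (hcont.intervalIntegrable 0 1)
      ((continuous_const.add ((continuous_const.mul continuous_id).mul continuous_const)).intervalIntegrable 0 1)
    intro t ht
    simp only [Pi.add_apply, Pi.mul_apply, id_eq]
    have ht0 : 0 ≤ t := ht.1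
    have key : φ' t - ⟪gh z, d⟫ = ⟪gh (z + t • d) - gh z, d⟫ := by
      rw [inner_sub_left]
    have hcs : ⟪gh (z + t • d) - gh z, d⟫ ≤ ‖gh (z + t • d) - gh z‖ * ‖d‖ :=
      real_inner_le_norm _ _
    have hl : ‖gh (z + t • d) - gh z‖ ≤ L * (t * ‖d‖) := by
      have := hlip (z + t • d) z
      simpa [norm_smul, abs_of_nonneg ht0] using this
    nlinarith [norm_nonneg d, norm_nonneg (gh (z + t • d) - gh z)]
  have hrhs : ∫ t in (0:ℝ)..1, (⟪gh z, d⟫ + L * t * ‖d‖^2) = ⟪gh z, d⟫ + L/2 * ‖d‖^2 := by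
    rw [intervalIntegral.integral_add (intervalIntegrable_const)]
    · rw [intervalIntegral.integral_const]
      have : ∫ t in (0:ℝ)..1, L * t * ‖d‖^2 = (L * ‖d‖^2) * ∫ t in (0:ℝ)..1, t := by
        rw [← intervalIntegral.integral_const_mul]
        congr 1; ext t; ring
      rw [this, integral_id]
      norm_num; ring
    · exact ((continuous_const.mul continuous_id).mul continuous_const).intervalIntegrable 0 1
  have h0 : z + (0:ℝ) • d = z := by module
  have h1 : z + (1:ℝ) • d = y := by rw [hd]; module
  rw [h0, h1] at hftc
  linarith [hftc ▸ hbound, hrhs ▸ hbound]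

lemma one_step {α L : ℝ} (hα0 : 0 < α) (hαL : α * L = 1)
    (A A' B B' X U G : E) (fA' fX hA' hX hz gsB' gsU : ℝ)
    (i1 : gsB' + ⟪A + α • (B - B'), U - B'⟫ ≤ gsU)
    (i2 : α * fA' + ⟪(A - α • ((2:ℝ) • B' - B) - α • G) - A', X - A'⟫ ≤ α * fX)
    (i3 : hz + ⟪G, X - (A + α • (B - B'))⟫ ≤ hX)
    (i4 : hA' ≤ hz + ⟪G, A' - (A + α • (B - B'))⟫ + L/2 * ‖A' - (A + α • (B - B'))‖^2) :
    fA' + hA' + ⟪U, A'⟫ - gsU - (fX + hX + ⟪B', X⟫ - gsB') ≤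
      1/(2*α) * (‖A - X‖^2 - ‖A' - X‖^2) + α/2 * (‖B - U‖^2 - ‖B' - U‖^2)
        + (⟪A - X, B - U⟫ - ⟪A' - X, B' - U⟫) := by
  have h2α : (0:ℝ) < 2 * α := by linarith
  rw [← mul_le_mul_iff_right₀ h2α]
  have hrhs : 2 * α * (1/(2*α) * (‖A - X‖^2 - ‖A' - X‖^2) + α/2 * (‖B - U‖^2 - ‖B' - U‖^2)
      + (⟪A - X, B - U⟫ - ⟪A' - X, B' - U⟫))
      = (‖A - X‖^2 - ‖A' - X‖^2) + α^2 * (‖B - U‖^2 - ‖B' - U‖^2)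
        + 2 * α * (⟪A - X, B - U⟫ - ⟪A' - X, B' - U⟫) := by
    field_simp
  rw [hrhs]
  have i1' := mul_le_mul_of_nonneg_left i1 h2α.le
  have i3' := mul_le_mul_of_nonneg_left i3 h2α.le
  have i4' : 2 * α * hA' ≤ 2 * α * (hz + ⟪G, A' - (A + α • (B - B'))⟫)
      + ‖A' - (A + α • (B - B'))‖^2 := by
    have := mul_le_mul_of_nonneg_left i4 h2α.le
    have e : 2 * α * (L/2 * ‖A' - (A + α • (B - B'))‖^2) = ‖A' - (A + α • (B - B'))‖^2 := by
      linear_combination (‖A' - (A + α • (B - B'))‖^2) * hαL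
    nlinarith [this, e]
  simp only [← real_inner_self_eq_norm_sq, inner_add_left, inner_add_right,
    inner_sub_left, inner_sub_right, real_inner_smul_left, real_inner_smul_right,
    real_inner_comm] at i1' i2 i3' i4' ⊢
  nlinarith [i1', i2, i3', i4']

end Auxiliary

set_option maxHeartbeats 1000000 in
/-- Ergodic convergence of DYS-gf with step size `α = 1/L`: the primal–dual gap of
the averaged iterates is bounded by `(‖x⁰ − x‖² + α²‖u⁰ − u‖²)/(αK)`. -/
theorem dys_gf_ergodic_rate (n K : ℕ) (hK : 1 ≤ K) (L α : ℝ) (hL : 0 < L)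
    (hα : α = 1 / L)
    (Df Dg Dgs : Set (EuclideanSpace ℝ (Fin n)))
    (f g gs h : EuclideanSpace ℝ (Fin n) → ℝ)
    (gh : EuclideanSpace ℝ (Fin n) → EuclideanSpace ℝ (Fin n))
    (hf : IsCCP Df f) (hg : IsCCP Dg g) (hconj : IsConjugateOn Dg g Dgs gs)
    (hh : ConvexOn ℝ Set.univ h) (hgrad : ∀ z, HasGradientAt h (gh z) z)
    (hlip : ∀ z w, ‖gh z - gh w‖ ≤ L * ‖z - w‖)
    (x u : ℕ → EuclideanSpace ℝ (Fin n))
    (hu : ∀ k, IsProxOn Dgs (fun v => α⁻¹ * gs v) (u k + α⁻¹ • x k) (u (k + 1)))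
    (hx : ∀ k, IsProxOn Df (fun v => α * f v)
      (x k - α • ((2 : ℝ) • u (k + 1) - u k) -
        α • gh (x k + α • (u k - u (k + 1)))) (x (k + 1))) :
    ∀ xx ∈ Df, ∀ uu ∈ Dgs,
      (f ((K : ℝ)⁻¹ • ∑ k ∈ Icc 1 K, x k) + h ((K : ℝ)⁻¹ • ∑ k ∈ Icc 1 K, x k) +
          ⟪uu, (K : ℝ)⁻¹ • ∑ k ∈ Icc 1 K, x k⟫ - gs uu) -
        (f xx + h xx + ⟪(K : ℝ)⁻¹ • ∑ k ∈ Icc 1 K, u k, xx⟫ -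
          gs ((K : ℝ)⁻¹ • ∑ k ∈ Icc 1 K, u k)) ≤
      (1 / (α * (K : ℝ))) * (‖x 0 - xx‖ ^ 2 + α ^ 2 * ‖u 0 - uu‖ ^ 2) := by
  intro xx hxx uu huu
  have hα0 : 0 < α := by rw [hα]; positivity
  have hαne : α ≠ 0 := ne_of_gt hα0
  have hαL : α * L = 1 := by rw [hα]; field_simp
  have hKpos : (0:ℝ) < K := by exact_mod_cast Nat.lt_of_lt_of_le Nat.zero_lt_one hK
  have hKne : (K:ℝ) ≠ 0 := ne_of_gt hKpos
  have hgs_cvx : ConvexOn ℝ Dgs gs := conj_convexOn hconj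
  set c : ℕ → ℝ := fun k => 1/(2*α) * ‖x k - xx‖^2 + α/2 * ‖u k - uu‖^2
    + ⟪x k - xx, u k - uu⟫ with hc
  set gap : ℕ → ℝ := fun k => f (x (k+1)) + h (x (k+1)) + ⟪uu, x (k+1)⟫ - gs uu
    - (f xx + h xx + ⟪u (k+1), xx⟫ - gs (u (k+1))) with hgap
  -- one-step bound
  have step : ∀ k, gap k ≤ c k - c (k+1) := by
    intro k
    have hφu : ConvexOn ℝ Dgs (fun v => α⁻¹ * gs v) := hgs_cvx.smul (by positivity)
    have hφf : ConvexOn ℝ Df (fun v => α * f v) := hf.2.1.smul hα0.le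
    have p1 := prox_fo hφu (hu k).1 (hu k).2 uu huu
    have i1 : gs (u (k+1)) + ⟪x k + α • (u k - u (k+1)), uu - u (k+1)⟫ ≤ gs uu := by
      have h1 := mul_le_mul_of_nonneg_left p1 hα0.le
      rw [mul_add] at h1
      have hvec : x k + α • (u k - u (k+1)) = α • ((u k + α⁻¹ • x k) - u (k+1)) := by
        match_scalars <;> field_simp
      rw [hvec, real_inner_smul_left]
      have e1 : α * (α⁻¹ * gs (u (k+1))) = gs (u (k+1)) := by field_simp
      have e2 : α * (α⁻¹ * gs uu) = gs uu := by field_simp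
      rw [e1, e2] at h1
      linarith
    have i2 := prox_fo hφf (hx k).1 (hx k).2 xx hxx
    have i3 := convex_fo hh hgrad (x k + α • (u k - u (k+1))) xx
    have i4 := descent_lemma hL hgrad hlip (x k + α • (u k - u (k+1))) (x (k+1))
    have key := one_step hα0 hαL (x k) (x (k+1)) (u k) (u (k+1)) xx uu
      (gh (x k + α • (u k - u (k+1))))
      (f (x (k+1))) (f xx) (h (x (k+1))) (h xx)
      (h (x k + α • (u k - u (k+1)))) (gs (u (k+1))) (gs uu) i1 i2 i3 i4
    calc gap k ≤ 1/(2*α) * (‖x k - xx‖^2 - ‖x (k+1) - xx‖^2)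
          + α/2 * (‖u k - uu‖^2 - ‖u (k+1) - uu‖^2)
          + (⟪x k - xx, u k - uu⟫ - ⟪x (k+1) - xx, u (k+1) - uu⟫) := key
      _ = c k - c (k+1) := by simp only [hc]; ring
  -- telescoping sum
  have hsum : ∑ k ∈ range K, gap k ≤ c 0 - c K :=
    calc ∑ k ∈ range K, gap k ≤ ∑ k ∈ range K, (c k - c (k+1)) :=
          Finset.sum_le_sum (fun k _ => step k)
      _ = c 0 - c K := Finset.sum_range_sub' c K
  -- bound the telescoped quantity
  have hend : c 0 - c K ≤ 1/α * (‖x 0 - xx‖^2 + α^2 * ‖u 0 - uu‖^2) := by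
    have h2α : (0:ℝ) < 2*α := by linarith
    rw [← mul_le_mul_iff_right₀ h2α]
    have ec : ∀ k : ℕ, 2*α*(c k) = ‖x k - xx‖^2 + α^2*‖u k - uu‖^2
        + 2*α*⟪x k - xx, u k - uu⟫ := by
      intro k; simp only [hc]; field_simp
    have cs0 := mul_le_mul_of_nonneg_left (real_inner_le_norm (x 0 - xx) (u 0 - uu)) h2α.le
    have csK : 2*α*(-⟪x K - xx, u K - uu⟫) ≤ 2*α*(‖x K - xx‖ * ‖u K - uu‖) := by
      apply mul_le_mul_of_nonneg_left _ h2α.le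
      have h := real_inner_le_norm (-(x K - xx)) (u K - uu)
      rw [inner_neg_left, norm_neg] at h
      exact h
    have am0 : 2*α*(‖x 0 - xx‖ * ‖u 0 - uu‖) ≤ ‖x 0 - xx‖^2 + α^2*‖u 0 - uu‖^2 := by
      nlinarith [sq_nonneg (‖x 0 - xx‖ - α*‖u 0 - uu‖)]
    have amK : 2*α*(‖x K - xx‖ * ‖u K - uu‖) ≤ ‖x K - xx‖^2 + α^2*‖u K - uu‖^2 := by
      nlinarith [sq_nonneg (‖x K - xx‖ - α*‖u K - uu‖)]
    have erhs : 2*α*(1/α * (‖x 0 - xx‖^2 + α^2 * ‖u 0 - uu‖^2))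
        = 2*(‖x 0 - xx‖^2 + α^2 * ‖u 0 - uu‖^2) := by field_simp
    have eL : 2*α*(c 0 - c K) = 2*α*(c 0) - 2*α*(c K) := by ring
    rw [erhs, eL, ec 0, ec K]
    nlinarith [sq_nonneg (‖x K - xx‖^2), norm_nonneg (x K - xx), norm_nonneg (u K - uu),
      sq_nonneg (‖x K - xx‖), sq_nonneg (‖u K - uu‖), cs0, csK, am0, amK]
  -- Jensen / averaging
  have hw0 : ∀ i ∈ Icc 1 K, (0:ℝ) ≤ (K:ℝ)⁻¹ := fun i _ => by positivity
  have hw1 : ∑ _i ∈ Icc 1 K, (K:ℝ)⁻¹ = 1 := by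
    rw [Finset.sum_const, Nat.card_Icc, Nat.add_sub_cancel, nsmul_eq_mul,
      mul_inv_cancel₀ hKne]
  have hxmem : ∀ i ∈ Icc 1 K, x i ∈ Df := by
    intro i hi
    obtain ⟨j, rfl⟩ := Nat.exists_eq_add_of_le (mem_Icc.mp hi).1
    rw [Nat.add_comm]
    exact (hx j).1
  have humem : ∀ i ∈ Icc 1 K, u i ∈ Dgs := by
    intro i hi
    obtain ⟨j, rfl⟩ := Nat.exists_eq_add_of_le (mem_Icc.mp hi).1
    rw [Nat.add_comm]
    exact (hu j).1
  have hsmul : ∀ p : ℕ → EuclideanSpace ℝ (Fin n),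
      (K:ℝ)⁻¹ • ∑ k ∈ Icc 1 K, p k = ∑ k ∈ Icc 1 K, (K:ℝ)⁻¹ • p k := fun p =>
    Finset.smul_sum
  have hjf : f ((K:ℝ)⁻¹ • ∑ k ∈ Icc 1 K, x k) ≤ (K:ℝ)⁻¹ * ∑ k ∈ Icc 1 K, f (x k) := by
    rw [hsmul x, Finset.mul_sum]
    exact hf.2.1.map_sum_le hw0 hw1 hxmem
  have hjh : h ((K:ℝ)⁻¹ • ∑ k ∈ Icc 1 K, x k) ≤ (K:ℝ)⁻¹ * ∑ k ∈ Icc 1 K, h (x k) := by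
    rw [hsmul x, Finset.mul_sum]
    exact hh.map_sum_le hw0 hw1 (fun i _ => Set.mem_univ _)
  have hjgs : gs ((K:ℝ)⁻¹ • ∑ k ∈ Icc 1 K, u k) ≤ (K:ℝ)⁻¹ * ∑ k ∈ Icc 1 K, gs (u k) := by
    rw [hsmul u, Finset.mul_sum]
    exact hgs_cvx.map_sum_le hw0 hw1 humem
  have hip1 : ⟪uu, (K:ℝ)⁻¹ • ∑ k ∈ Icc 1 K, x k⟫
      = (K:ℝ)⁻¹ * ∑ k ∈ Icc 1 K, ⟪uu, x k⟫ := by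
    rw [real_inner_smul_right, inner_sum]
  have hip2 : ⟪(K:ℝ)⁻¹ • ∑ k ∈ Icc 1 K, u k, xx⟫
      = (K:ℝ)⁻¹ * ∑ k ∈ Icc 1 K, ⟪u k, xx⟫ := by
    rw [real_inner_smul_left, sum_inner]
  -- reindex the gap sum
  have hreindex : ∑ k ∈ Icc 1 K, (f (x k) + h (x k) + ⟪uu, x k⟫ - gs uu
      - (f xx + h xx + ⟪u k, xx⟫ - gs (u k))) = ∑ k ∈ range K, gap k := by
    rw [← Finset.Ico_add_one_right_eq_Icc, Finset.sum_Ico_eq_sum_range]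
    try simp only [Nat.add_sub_cancel]
    apply Finset.sum_congr rfl
    intro i _
    simp only [hgap]
    rw [Nat.add_comm 1 i]
  -- distribute the sum
  have hdist : ∑ k ∈ Icc 1 K, (f (x k) + h (x k) + ⟪uu, x k⟫ - gs uu
      - (f xx + h xx + ⟪u k, xx⟫ - gs (u k)))
      = (∑ k ∈ Icc 1 K, f (x k)) + (∑ k ∈ Icc 1 K, h (x k))
        + (∑ k ∈ Icc 1 K, ⟪uu, x k⟫) - K * gs uu - K * f xx - K * h xx
        - (∑ k ∈ Icc 1 K, ⟪u k, xx⟫) + (∑ k ∈ Icc 1 K, gs (u k)) := by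
    simp only [Finset.sum_add_distrib, Finset.sum_sub_distrib, Finset.sum_const,
      Nat.card_Icc, Nat.add_sub_cancel, nsmul_eq_mul]
    ring
  have hKinv1 : (K:ℝ)⁻¹ * K = 1 := by field_simp
  -- final assembly
  have hfinal : ∑ k ∈ range K, gap k ≤ 1/α * (‖x 0 - xx‖^2 + α^2 * ‖u 0 - uu‖^2) :=
    le_trans hsum hend
  have hmain : (f ((K:ℝ)⁻¹ • ∑ k ∈ Icc 1 K, x k) + h ((K:ℝ)⁻¹ • ∑ k ∈ Icc 1 K, x k)
      + ⟪uu, (K:ℝ)⁻¹ • ∑ k ∈ Icc 1 K, x k⟫ - gs uu)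
      - (f xx + h xx + ⟪(K:ℝ)⁻¹ • ∑ k ∈ Icc 1 K, u k, xx⟫
        - gs ((K:ℝ)⁻¹ • ∑ k ∈ Icc 1 K, u k))
      ≤ (K:ℝ)⁻¹ * ∑ k ∈ range K, gap k := by
    rw [← hreindex, hdist]
    rw [hip1, hip2]
    have expand : (K:ℝ)⁻¹ * ((∑ k ∈ Icc 1 K, f (x k)) + (∑ k ∈ Icc 1 K, h (x k))
        + (∑ k ∈ Icc 1 K, ⟪uu, x k⟫) - K * gs uu - K * f xx - K * h xx
        - (∑ k ∈ Icc 1 K, ⟪u k, xx⟫) + (∑ k ∈ Icc 1 K, gs (u k)))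
        = (K:ℝ)⁻¹ * (∑ k ∈ Icc 1 K, f (x k)) + (K:ℝ)⁻¹ * (∑ k ∈ Icc 1 K, h (x k))
        + (K:ℝ)⁻¹ * (∑ k ∈ Icc 1 K, ⟪uu, x k⟫) - gs uu - f xx - h xx
        - (K:ℝ)⁻¹ * (∑ k ∈ Icc 1 K, ⟪u k, xx⟫)
        + (K:ℝ)⁻¹ * (∑ k ∈ Icc 1 K, gs (u k)) := by
      field_simp
      try ring
    rw [expand]
    linarith [hjf, hjh, hjgs]
  calc _ ≤ (K:ℝ)⁻¹ * ∑ k ∈ range K, gap k := hmain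
    _ ≤ (K:ℝ)⁻¹ * (1/α * (‖x 0 - xx‖^2 + α^2 * ‖u 0 - uu‖^2)) := by
        apply mul_le_mul_of_nonneg_left hfinal (by positivity)
    _ = (1 / (α * (K : ℝ))) * (‖x 0 - xx‖^2 + α^2 * ‖u 0 - uu‖^2) := by
        rw [one_div, one_div, mul_inv]
        ring
end
end
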